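/- arXiv:1209.4559 — 2 statements merged into one kernel-verified Lean document; each statement's English description precedes it below -/
import Mathlib

section
/- Let k((Γ)) be endowed with a series derivation of Hardy type d, Γ a subgroup of the Hahn group Σ_{φ∈Φ} ℝ, θ_φ := v(d(t_φ)/t_φ), and θ̃ := l.u.b.{θ_φ : φ ∈ Φ}. Let α ∈ Γ with α ≠ θ̃, written α = α₀1_{φ₀} + ⋯ . Then there exists a uniquely determined ψ_α ∈ Φ such that α − θ_{ψ_α} = γ₀1_{ψ_α} + ⋯ for some γ₀ ≠ 0; and writing d(t_{ψ_α})/t_{ψ_α} = c_{ψ_α} t^{θ_{ψ_α}} + ⋯ (leading coefficient c_{ψ_α}), every series a = a_α t^α + ⋯ with v(a) = α admits the monomial (a_α/(γ₀ c_{ψ_α})) t^{α − θ_{ψ_α}} as an asymptotic integral. -/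
/- Common setting: a generalized series field `k((Γ))`, where the totally ordered abelian
group `Γ` is regarded, via Hahn's embedding theorem, as a subgroup of the Hahn group
`Σ_{φ ∈ Φ} ℝ = HahnSeries Φ ℝ`, and the coefficient field `k` contains the real exponents
(via a ring homomorphism `ι : ℝ →+* k`). -/

open HahnSeries

noncomputable section

/-- Archimedean equivalence on an ordered abelian group. -/
def ArchEquiv {Γ : Type*} [AddCommGroup Γ] [LinearOrder Γ] [IsOrderedAddMonoid Γ] (x y : Γ) : Prop :=
  ∃ n : ℕ, |x| ≤ n • |y| ∧ |y| ≤ n • |x|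

/-- Lexicographic positivity of a (generalized) Hahn series: the leading coefficient is
positive. -/
def LexPos {Φ : Type*} [LinearOrder Φ] {R : Type*} [Zero R] [PartialOrder R]
    (x : HahnSeries Φ R) : Prop :=
  ∃ φ, 0 < x.coeff φ ∧ ∀ ψ, ψ < φ → x.coeff ψ = 0

/-- Lexicographic order relation. -/
def LexLe {Φ : Type*} [LinearOrder Φ] {R : Type*} [AddCommGroup R] [PartialOrder R]
    (x y : HahnSeries Φ R) : Prop :=
  x = y ∨ LexPos (y - x)

/-- The data of Hahn's embedding theorem: `Γ` is (identified with) a subgroup of the Hahn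
group `Σ_{φ ∈ Φ} ℝ` ordered lexicographically, containing the characteristic functions
`1_φ = single φ 1`.  The natural valuation of `γ ∈ Γ` is `(e γ).orderTop`. -/
structure HahnEmbeddingData (Φ : Type*) [LinearOrder Φ]
    (Γ : Type*) [AddCommGroup Γ] [LinearOrder Γ] [IsOrderedAddMonoid Γ] where
  e : Γ →+ HahnSeries Φ ℝ
  inj : Function.Injective e
  ord : ∀ γ : Γ, 0 < γ ↔ LexPos (e γ)
  b : Φ → Γ
  hb : ∀ φ, e (b φ) = HahnSeries.single φ 1

variable {Φ : Type*} [LinearOrder Φ] {Γ : Type*} [AddCommGroup Γ] [LinearOrder Γ] [IsOrderedAddMonoid Γ]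
  {k : Type*} [Field k]

/-- The fundamental monomial `t_φ = t^{1_φ}` in `k((Γ))`. -/
def tmon (H : HahnEmbeddingData Φ Γ) (k : Type*) [Field k] (φ : Φ) : HahnSeries Γ k :=
  HahnSeries.single (H.b φ) 1

/-- The logarithmic derivative `d(t_φ)/t_φ` of the fundamental monomial `t_φ`. -/
def logDer (H : HahnEmbeddingData Φ Γ) (D : HahnSeries Γ k → HahnSeries Γ k) (φ : Φ) :
    HahnSeries Γ k :=
  D (tmon H k φ) * (tmon H k φ)⁻¹

/-- A series derivation on `k((Γ))`: a derivation which is strongly linear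
(`d(Σ a_α t^α) = Σ a_α d(t^α)`, the family being summable) and satisfies the strong
Leibniz rule (`d(t^α) = t^α Σ_φ α_φ d(t_φ)/t_φ`, the family being summable). -/
structure IsSeriesDerivation (H : HahnEmbeddingData Φ Γ) (ι : ℝ →+* k)
    (D : HahnSeries Γ k → HahnSeries Γ k) : Prop where
  map_add : ∀ x y, D (x + y) = D x + D y
  leibniz : ∀ x y, D (x * y) = D x * y + x * D y
  strong_linear : ∀ x : HahnSeries Γ k, ∃ s : SummableFamily Γ k Γ,
    (∀ γ, s γ = x.coeff γ • D (HahnSeries.single γ 1)) ∧ D x = s.hsum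
  strong_leibniz : ∀ γ : Γ, ∃ s : SummableFamily Γ k Φ,
    (∀ φ, s φ = ι ((H.e γ).coeff φ) • (HahnSeries.single γ 1 * logDer H D φ)) ∧
    D (HahnSeries.single γ 1) = s.hsum

/-- (HD1): the valuation ring is `ker d + m_v`. -/
def HDone (D : HahnSeries Γ k → HahnSeries Γ k) : Prop :=
  {x : HahnSeries Γ k | 0 ≤ x.orderTop} =
    {x : HahnSeries Γ k | ∃ c m, D c = 0 ∧ 0 < HahnSeries.orderTop m ∧ x = c + m}

/-- (HD2): l'Hospital's rule. -/
def HDtwo (D : HahnSeries Γ k → HahnSeries Γ k) : Prop :=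
  ∀ a b : HahnSeries Γ k, a ≠ 0 → b ≠ 0 → a.order ≠ 0 → b.order ≠ 0 →
    (a.orderTop ≤ b.orderTop ↔ (D a).orderTop ≤ (D b).orderTop)

/-- (HD3): compatibility of the logarithmic derivative with the valuation. -/
def HDthree (D : HahnSeries Γ k → HahnSeries Γ k) : Prop :=
  ∀ a b : HahnSeries Γ k, a ≠ 0 → b ≠ 0 → |b.order| < |a.order| → 0 < |b.order| →
    (D a * a⁻¹).orderTop ≤ (D b * b⁻¹).orderTop ∧
      ((D a * a⁻¹).orderTop = (D b * b⁻¹).orderTop ↔ ArchEquiv a.order b.order)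

/-- A series derivation of Hardy type on `k((Γ))`. -/
def IsHardySeriesDerivation (H : HahnEmbeddingData Φ Γ) (ι : ℝ →+* k)
    (D : HahnSeries Γ k → HahnSeries Γ k) : Prop :=
  IsSeriesDerivation H ι D ∧ HDone D ∧ HDtwo D ∧ HDthree D

end

section MAI

variable {Φ : Type*} [LinearOrder Φ] {Γ : Type*} [AddCommGroup Γ] [LinearOrder Γ] [IsOrderedAddMonoid Γ]
  {k : Type*} [Field k]

variable {Φ : Type*} [LinearOrder Φ] {Γ : Type*} [AddCommGroup Γ] [LinearOrder Γ] [IsOrderedAddMonoid Γ]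
  {k : Type*} [Field k]

namespace MAI

theorem orderTop_eq {Γ' : Type*} [LinearOrder Γ'] {R : Type*} [Zero R]
    {x : HahnSeries Γ' R} {g : Γ'} (h0 : x.coeff g ≠ 0)
    (hb : ∀ g' < g, x.coeff g' = 0) : x.orderTop = g :=
  orderTop_eq_of_le (by rwa [HahnSeries.mem_support])
    (fun g' hg' => le_of_not_gt fun h => hg' (hb g' h))

theorem order_eq {Γ' : Type*} [LinearOrder Γ'] [Zero Γ'] {R : Type*} [Zero R]
    {x : HahnSeries Γ' R} {g : Γ'} (h0 : x.coeff g ≠ 0)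
    (hb : ∀ g' < g, x.coeff g' = 0) : x.order = g := by
  have hx : x ≠ 0 := ne_zero_of_coeff_ne_zero h0
  exact WithTop.coe_injective ((order_eq_orderTop_of_ne_zero hx).trans (orderTop_eq h0 hb))

theorem exists_orderTop_eq {Γ' : Type*} [LinearOrder Γ'] {R : Type*} [Zero R]
    {x : HahnSeries Γ' R} (hx : x ≠ 0) : ∃ g : Γ', x.orderTop = g := by
  obtain ⟨g, hg⟩ := WithTop.ne_top_iff_exists.1 (orderTop_ne_top.2 hx)
  exact ⟨g, hg.symm⟩

theorem lt_orderTop {Γ' : Type*} [LinearOrder Γ'] {R : Type*} [Zero R]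
    {x : HahnSeries Γ' R} {g : Γ'} (hb : ∀ g' ≤ g, x.coeff g' = 0) :
    (g : WithTop Γ') < x.orderTop := by
  rcases eq_or_ne x 0 with h | h
  · simp [h]
  · obtain ⟨w, hw⟩ := exists_orderTop_eq h
    rw [hw, WithTop.coe_lt_coe]
    by_contra hc
    push_neg at hc
    exact coeff_orderTop_ne hw (hb _ hc)

theorem lexPos_of {x : HahnSeries Φ ℝ} {w : Φ} (hw : x.orderTop = w)
    (h : 0 < x.coeff w) : LexPos x :=
  ⟨w, h, fun ψ hψ => coeff_eq_zero_of_lt_orderTop (by rw [hw]; exact_mod_cast hψ)⟩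

theorem e_ne (H : HahnEmbeddingData Φ Γ) {γ : Γ} (hγ : γ ≠ 0) : H.e γ ≠ 0 :=
  fun h => hγ (H.inj (h.trans (map_zero H.e).symm))

theorem coeff_pos_of_pos (H : HahnEmbeddingData Φ Γ) {γ : Γ} (h : 0 < γ) {w : Φ}
    (hw : (H.e γ).orderTop = w) : 0 < (H.e γ).coeff w := by
  obtain ⟨φ, hφ, hbelow⟩ := (H.ord γ).1 h
  have hot : (H.e γ).orderTop = φ := orderTop_eq hφ.ne' hbelow
  have : w = φ := WithTop.coe_injective (hw.symm.trans hot)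
  rwa [this]

theorem b_ne (H : HahnEmbeddingData Φ Γ) (φ : Φ) : H.b φ ≠ 0 := by
  intro h
  have := H.hb φ
  rw [h, map_zero] at this
  have : (0 : HahnSeries Φ ℝ).coeff φ = (1 : ℝ) := by
    rw [this, coeff_single_same]
  simp at this

theorem b_pos (H : HahnEmbeddingData Φ Γ) (φ : Φ) : 0 < H.b φ := by
  refine (H.ord _).2 ⟨φ, ?_, fun ψ h => ?_⟩
  · rw [H.hb, coeff_single_same]; norm_num
  · rw [H.hb]; exact coeff_single_of_ne h.ne

theorem b_lt (H : HahnEmbeddingData Φ Γ) {φ ψ : Φ} (h : φ < ψ) : H.b ψ < H.b φ := by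
  rw [← sub_pos]
  refine (H.ord _).2 ⟨φ, ?_, fun χ hχ => ?_⟩
  · rw [map_sub, H.hb, H.hb, coeff_sub, coeff_single_same, coeff_single_of_ne h.ne]
    norm_num
  · rw [map_sub, H.hb, H.hb, coeff_sub, coeff_single_of_ne hχ.ne,
      coeff_single_of_ne (hχ.trans h).ne, sub_zero]

theorem not_arch (H : HahnEmbeddingData Φ Γ) {φ ψ : Φ} (h : φ < ψ) :
    ¬ ArchEquiv (H.b φ) (H.b ψ) := by
  rintro ⟨n, h1, _⟩
  rw [abs_of_pos (b_pos H φ), abs_of_pos (b_pos H ψ)] at h1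
  set x := n • H.b ψ - H.b φ with hxdef
  have hex : H.e x = n • HahnSeries.single ψ (1:ℝ) - HahnSeries.single φ 1 := by
    rw [hxdef, map_sub, map_nsmul, H.hb, H.hb]
  have hcoeffφ : (H.e x).coeff φ = -1 := by
    rw [hex, coeff_sub, coeff_single_same]
    have : (n • HahnSeries.single ψ (1:ℝ)).coeff φ = 0 := by
      rw [coeff_nsmul]; simp [coeff_single_of_ne h.ne]
    rw [this]; ring
  have hne : x ≠ 0 := by
    intro h0
    rw [h0, map_zero] at hcoeffφ
    simp at hcoeffφ
  have hpos : 0 < x := (sub_nonneg.2 h1).lt_of_ne (Ne.symm hne)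
  obtain ⟨w, hw, hbelow⟩ := (H.ord x).1 hpos
  have hwφ : w ≤ φ := by
    by_contra hc
    push_neg at hc
    rw [hbelow φ hc] at hcoeffφ
    norm_num at hcoeffφ
  have : (H.e x).coeff w ≤ 0 := by
    rw [hex, coeff_sub]
    have h1' : (n • HahnSeries.single ψ (1:ℝ)).coeff w = 0 := by
      rw [coeff_nsmul]; simp [coeff_single_of_ne (hwφ.trans_lt h).ne]
    rw [h1']
    rcases eq_or_ne w φ with rfl | hwψ
    · rw [coeff_single_same]; norm_num
    · rw [coeff_single_of_ne hwψ]; norm_num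
  exact absurd hw this.not_gt




variable (H : HahnEmbeddingData Φ Γ) (ι : ℝ →+* k)
  (D : HahnSeries Γ k → HahnSeries Γ k) (θ : Φ → Γ)

theorem theta_lt (hD : IsHardySeriesDerivation H ι D)
    (hθ : ∀ φ, (logDer H D φ).orderTop = ((θ φ : Γ) : WithTop Γ))
    {φ ψ : Φ} (h : φ < ψ) : θ φ < θ ψ := by
  obtain ⟨_, _, _, h3⟩ := hD
  have ha : tmon H k φ ≠ 0 := single_ne_zero one_ne_zero
  have hb : tmon H k ψ ≠ 0 := single_ne_zero one_ne_zero
  have hoa : (tmon H k φ).order = H.b φ := order_single one_ne_zero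
  have hob : (tmon H k ψ).order = H.b ψ := order_single one_ne_zero
  obtain ⟨hle, hiff⟩ := h3 (tmon H k φ) (tmon H k ψ) ha hb
    (by rw [hoa, hob, abs_of_pos (b_pos H φ), abs_of_pos (b_pos H ψ)]; exact b_lt H h)
    (by rw [hob]; exact abs_pos.2 (b_pos H ψ).ne')
  have hle' : ((θ φ : Γ) : WithTop Γ) ≤ ((θ ψ : Γ) : WithTop Γ) := by
    rw [← hθ φ, ← hθ ψ]; exact hle
  refine (WithTop.coe_le_coe.1 hle').lt_of_ne fun heq => not_arch H h ?_
  rw [← hoa, ← hob]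
  refine hiff.1 (show (logDer H D φ).orderTop = (logDer H D ψ).orderTop by rw [hθ φ, hθ ψ, heq])

theorem theta_le (hD : IsHardySeriesDerivation H ι D)
    (hθ : ∀ φ, (logDer H D φ).orderTop = ((θ φ : Γ) : WithTop Γ))
    {φ ψ : Φ} (h : φ ≤ ψ) : θ φ ≤ θ ψ := by
  rcases eq_or_lt_of_le h with rfl | h
  · exact le_rfl
  · exact (theta_lt H ι D θ hD hθ h).le

theorem logDer_ne (hθ : ∀ φ, (logDer H D φ).orderTop = ((θ φ : Γ) : WithTop Γ))
    (φ : Φ) : logDer H D φ ≠ 0 :=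
  orderTop_ne_top.1 (by rw [hθ φ]; exact WithTop.coe_ne_top)

theorem logDer_order (hθ : ∀ φ, (logDer H D φ).orderTop = ((θ φ : Γ) : WithTop Γ))
    (φ : Φ) : (logDer H D φ).order = θ φ :=
  WithTop.coe_injective ((order_eq_orderTop_of_ne_zero (logDer_ne H D θ hθ φ)).trans (hθ φ))

theorem Dsingle_coeff (hd : IsSeriesDerivation H ι D) (γ g : Γ) :
    (D (HahnSeries.single γ (1:k))).coeff g
      = ∑ᶠ φ, ι ((H.e γ).coeff φ) * (logDer H D φ).coeff (g - γ) := by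
  obtain ⟨s, hs, hDs⟩ := hd.strong_leibniz γ
  rw [hDs, SummableFamily.coeff_hsum]
  refine finsum_congr fun φ => ?_
  rw [hs φ, HahnSeries.coeff_smul, smul_eq_mul]
  congr 1
  conv_lhs => rw [show g = (g - γ) + γ by abel]
  rw [coeff_single_mul_add, one_mul]

theorem Dsingle_coeff_zero (hD : IsHardySeriesDerivation H ι D)
    (hθ : ∀ φ, (logDer H D φ).orderTop = ((θ φ : Γ) : WithTop Γ))
    {γ : Γ} (hγ : γ ≠ 0) {μ : Φ} (hμ : (H.e γ).orderTop = (μ : WithTop Φ))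
    {g : Γ} (hg : g < γ + θ μ) : (D (HahnSeries.single γ (1:k))).coeff g = 0 := by
  rw [Dsingle_coeff H ι D hD.1]
  refine finsum_eq_zero_of_forall_eq_zero fun φ => ?_
  by_cases hc : (H.e γ).coeff φ = 0
  · rw [hc, map_zero, zero_mul]
  · have hμφ : μ ≤ φ := by
      have := orderTop_le_of_coeff_ne_zero hc
      rw [hμ] at this
      exact_mod_cast this
    have h1 : g - γ < θ φ := lt_of_lt_of_le (by rwa [sub_lt_iff_lt_add'])
      (theta_le H ι D θ hD hθ hμφ)
    rw [coeff_eq_zero_of_lt_orderTop (x := logDer H D φ) (by rw [hθ φ]; exact_mod_cast h1), mul_zero]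

theorem Dsingle_coeff_lead (hD : IsHardySeriesDerivation H ι D)
    (hθ : ∀ φ, (logDer H D φ).orderTop = ((θ φ : Γ) : WithTop Γ))
    {γ : Γ} (hγ : γ ≠ 0) {μ : Φ} (hμ : (H.e γ).orderTop = (μ : WithTop Φ)) :
    (D (HahnSeries.single γ (1:k))).coeff (γ + θ μ)
      = ι ((H.e γ).coeff μ) * (logDer H D μ).leadingCoeff := by
  rw [Dsingle_coeff H ι D hD.1, show γ + θ μ - γ = θ μ by abel]
  rw [finsum_eq_single _ μ ?_]
  · congr 1
    rw [HahnSeries.leadingCoeff_eq, logDer_order H D θ hθ μ]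
  · intro φ hφ
    by_cases hc : (H.e γ).coeff φ = 0
    · rw [hc, map_zero, zero_mul]
    · have hμφ : μ < φ := by
        have := orderTop_le_of_coeff_ne_zero hc
        rw [hμ] at this
        exact lt_of_le_of_ne (by exact_mod_cast this) (Ne.symm hφ)
      have h1 : θ μ < θ φ := theta_lt H ι D θ hD hθ hμφ
      rw [coeff_eq_zero_of_lt_orderTop (x := logDer H D φ) (by rw [hθ φ]; exact_mod_cast h1), mul_zero]

theorem Dsingle_lead_ne (hD : IsHardySeriesDerivation H ι D)
    (hθ : ∀ φ, (logDer H D φ).orderTop = ((θ φ : Γ) : WithTop Γ))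
    {γ : Γ} (hγ : γ ≠ 0) {μ : Φ} (hμ : (H.e γ).orderTop = (μ : WithTop Φ)) :
    ι ((H.e γ).coeff μ) * (logDer H D μ).leadingCoeff ≠ 0 := by
  have h1 : (H.e γ).coeff μ ≠ 0 := coeff_orderTop_ne hμ
  have h2 : ι ((H.e γ).coeff μ) ≠ 0 := fun h =>
    h1 (ι.injective (by rw [h, map_zero]))
  exact mul_ne_zero h2 (leadingCoeff_ne_zero.2 (logDer_ne H D θ hθ μ))

theorem Dsingle_orderTop (hD : IsHardySeriesDerivation H ι D)
    (hθ : ∀ φ, (logDer H D φ).orderTop = ((θ φ : Γ) : WithTop Γ))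
    {γ : Γ} (hγ : γ ≠ 0) {μ : Φ} (hμ : (H.e γ).orderTop = (μ : WithTop Φ)) :
    (D (HahnSeries.single γ (1:k))).orderTop = ((γ + θ μ : Γ) : WithTop Γ) :=
  orderTop_eq
    (by rw [Dsingle_coeff_lead H ι D θ hD hθ hγ hμ]
        exact Dsingle_lead_ne H ι D θ hD hθ hγ hμ)
    (fun g' hg' => Dsingle_coeff_zero H ι D θ hD hθ hγ hμ hg')


theorem emb (hD : IsHardySeriesDerivation H ι D)
    (hθ : ∀ φ, (logDer H D φ).orderTop = ((θ φ : Γ) : WithTop Γ))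
    {γ δ : Γ} (hγ : γ ≠ 0) (hδ : δ ≠ 0) {μγ μδ : Φ}
    (hμγ : (H.e γ).orderTop = (μγ : WithTop Φ)) (hμδ : (H.e δ).orderTop = (μδ : WithTop Φ)) :
    γ ≤ δ ↔ γ + θ μγ ≤ δ + θ μδ := by
  have key := hD.2.2.1 (HahnSeries.single γ (1:k)) (HahnSeries.single δ (1:k))
    (single_ne_zero one_ne_zero) (single_ne_zero one_ne_zero)
    (by rw [order_single one_ne_zero]; exact hγ)
    (by rw [order_single one_ne_zero]; exact hδ)
  rw [orderTop_single one_ne_zero, orderTop_single one_ne_zero,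
    Dsingle_orderTop H ι D θ hD hθ hγ hμγ, Dsingle_orderTop H ι D θ hD hθ hδ hμδ] at key
  constructor
  · intro h
    exact WithTop.coe_le_coe.1 (key.1 (WithTop.coe_le_coe.2 h))
  · intro h
    exact WithTop.coe_le_coe.1 (key.2 (WithTop.coe_le_coe.2 h))

theorem key_lemma (hD : IsHardySeriesDerivation H ι D)
    (hθ : ∀ φ, (logDer H D φ).orderTop = ((θ φ : Γ) : WithTop Γ))
    {φ ψ : Φ} (h : φ < ψ) :
    ((φ : Φ) : WithTop Φ) < (H.e (θ ψ - θ φ)).orderTop := by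
  by_contra hle
  push_neg at hle
  have hdpos : 0 < θ ψ - θ φ := sub_pos.2 (theta_lt H ι D θ hD hθ h)
  have hedne : H.e (θ ψ - θ φ) ≠ 0 := e_ne H hdpos.ne'
  obtain ⟨χ, hχ⟩ := exists_orderTop_eq hedne
  have hχφ : χ ≤ φ := by
    rw [hχ] at hle
    exact_mod_cast hle
  -- H.b ψ < θ ψ - θ φ
  have hblt : H.b ψ < θ ψ - θ φ := by
    rw [← sub_pos]
    refine (H.ord _).2 ⟨χ, ?_, fun w hw => ?_⟩
    · rw [map_sub, H.hb, coeff_sub, coeff_single_of_ne (hχφ.trans_lt h).ne, sub_zero]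
      exact coeff_pos_of_pos H hdpos hχ
    · rw [map_sub, H.hb, coeff_sub,
        coeff_single_of_ne ((hw.trans_le hχφ).trans h).ne, sub_zero]
      exact coeff_eq_zero_of_lt_orderTop (by rw [hχ]; exact_mod_cast hw)
  have hbot : (H.e (H.b ψ)).orderTop = (ψ : WithTop Φ) := by
    rw [H.hb]; exact orderTop_single one_ne_zero
  have hemb := (emb H ι D θ hD hθ (b_ne H ψ) hdpos.ne' hbot hχ).1 hblt.le
  -- hemb : H.b ψ + θ ψ ≤ (θ ψ - θ φ) + θ χ
  have hθχ : θ χ ≤ θ φ := theta_le H ι D θ hD hθ hχφ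
  have : H.b ψ + θ ψ ≤ θ ψ := by
    calc H.b ψ + θ ψ ≤ (θ ψ - θ φ) + θ χ := hemb
    _ ≤ (θ ψ - θ φ) + θ φ := by exact add_le_add_right hθχ _
    _ = θ ψ := by abel
  have : H.b ψ ≤ 0 := by
    have := add_le_add_right this (-θ ψ)
    simpa using this
  exact (b_pos H ψ).not_ge this


theorem exists_psi (hD : IsHardySeriesDerivation H ι D)
    (hθ : ∀ φ, (logDer H D φ).orderTop = ((θ φ : Γ) : WithTop Γ))
    (α : Γ) (hα : ¬ IsLUB (Set.range θ) α) :
    ∃ ψ : Φ, (H.e (α - θ ψ)).orderTop = (ψ : WithTop Φ) := by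
  by_cases hc : ∃ φ, (H.e (α - θ φ)).orderTop ≤ ((φ : Φ) : WithTop Φ)
  · obtain ⟨φ, hφ⟩ := hc
    have hne : H.e (α - θ φ) ≠ 0 := by
      intro h0
      rw [h0, orderTop_zero] at hφ
      exact (WithTop.not_top_le_coe _) hφ
    obtain ⟨χ, hχ⟩ := exists_orderTop_eq hne
    have hχφ : χ ≤ φ := by
      rw [hχ] at hφ
      exact_mod_cast hφ
    refine ⟨χ, ?_⟩
    rcases eq_or_lt_of_le hχφ with rfl | hlt
    · exact hχ
    · have key := key_lemma H ι D θ hD hθ hlt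
      have heq : α - θ χ = (α - θ φ) + (θ φ - θ χ) := by abel
      rw [heq, map_add, orderTop_add_eq_left (by rw [hχ]; exact key)]
      exact hχ
  · exfalso
    apply hα
    push_neg at hc
    constructor
    · rintro x ⟨φ, rfl⟩
      by_contra hlt
      push_neg at hlt
      have hpos : 0 < θ φ - α := sub_pos.2 hlt
      have hene : H.e (θ φ - α) ≠ 0 := e_ne H hpos.ne'
      obtain ⟨w, hw⟩ := exists_orderTop_eq hene
      have hoppo : H.e (θ φ - α) = - H.e (α - θ φ) := by
        rw [← map_neg]; congr 1; abel
      have hφw : φ < w := by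
        have hh : ((φ : Φ) : WithTop Φ) < (w : WithTop Φ) := by
          rw [← hw, hoppo, orderTop_neg]; exact hc φ
        exact_mod_cast hh
      have hsum : H.e (θ φ - θ w) = H.e (θ φ - α) + H.e (α - θ w) := by
        rw [← map_add]; congr 1; abel
      have h3 : 0 < θ φ - θ w := by
        refine (H.ord _).2 ⟨w, ?_, fun v hv => ?_⟩
        · rw [hsum, coeff_add,
            coeff_eq_zero_of_lt_orderTop (x := H.e (α - θ w)) (hc w), add_zero]
          exact coeff_pos_of_pos H hpos hw
        · rw [hsum, coeff_add,
            coeff_eq_zero_of_lt_orderTop (x := H.e (θ φ - α)) (by rw [hw]; exact_mod_cast hv),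
            coeff_eq_zero_of_lt_orderTop (x := H.e (α - θ w))
              ((WithTop.coe_lt_coe.2 hv).trans (hc w))]
          norm_num
      exact absurd (sub_pos.1 h3) (theta_lt H ι D θ hD hθ hφw).asymm
    · intro u hu
      by_contra hlt
      push_neg at hlt
      have hpos : 0 < α - u := sub_pos.2 hlt
      have hene := e_ne H hpos.ne'
      obtain ⟨w, hw⟩ := exists_orderTop_eq hene
      have hθw : θ w ≤ u := hu ⟨w, rfl⟩
      have hsum : H.e (θ w - u) = H.e (θ w - α) + H.e (α - u) := by
        rw [← map_add]; congr 1; abel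
      have hoppo : H.e (θ w - α) = - H.e (α - θ w) := by
        rw [← map_neg]; congr 1; abel
      have h3 : 0 < θ w - u := by
        refine (H.ord _).2 ⟨w, ?_, fun v hv => ?_⟩
        · rw [hsum, coeff_add, hoppo, coeff_neg,
            coeff_eq_zero_of_lt_orderTop (x := H.e (α - θ w)) (hc w), neg_zero, zero_add]
          exact coeff_pos_of_pos H hpos hw
        · rw [hsum, coeff_add, hoppo, coeff_neg,
            coeff_eq_zero_of_lt_orderTop (x := H.e (α - θ w))
              ((WithTop.coe_lt_coe.2 hv).trans (hc w)),
            coeff_eq_zero_of_lt_orderTop (x := H.e (α - u)) (by rw [hw]; exact_mod_cast hv)]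
          norm_num
      exact absurd hθw (not_le.2 (sub_pos.1 h3))

theorem psi_unique (hD : IsHardySeriesDerivation H ι D)
    (hθ : ∀ φ, (logDer H D φ).orderTop = ((θ φ : Γ) : WithTop Γ)) {α : Γ} :
    ∀ {ψ₁ ψ₂ : Φ}, (H.e (α - θ ψ₁)).orderTop = (ψ₁ : WithTop Φ) →
      (H.e (α - θ ψ₂)).orderTop = (ψ₂ : WithTop Φ) → ψ₁ = ψ₂ := by
  have aux : ∀ p q : Φ, p < q → (H.e (α - θ p)).orderTop = (p : WithTop Φ) →
      (H.e (α - θ q)).orderTop = (q : WithTop Φ) → False := by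
    intro p q hpq hp hq
    have hsum : H.e (θ q - θ p) = H.e (α - θ p) + (- H.e (α - θ q)) := by
      rw [← map_neg, ← map_add]; congr 1; abel
    have hot : (H.e (θ q - θ p)).orderTop = (p : WithTop Φ) := by
      rw [hsum, orderTop_add_eq_left (by rw [hp, orderTop_neg, hq]; exact_mod_cast hpq)]
      exact hp
    have hk := key_lemma H ι D θ hD hθ hpq
    rw [hot] at hk
    exact lt_irrefl _ hk
  intro ψ₁ ψ₂ h1 h2
  rcases lt_trichotomy ψ₁ ψ₂ with h | h | h
  · exact absurd (aux ψ₁ ψ₂ h h1 h2) not_false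
  · exact h
  · exact absurd (aux ψ₂ ψ₁ h h2 h1) not_false

theorem part2 (hD : IsHardySeriesDerivation H ι D)
    (hθ : ∀ φ, (logDer H D φ).orderTop = ((θ φ : Γ) : WithTop Γ))
    (α : Γ) (ψ : Φ) (hψ : (H.e (α - θ ψ)).orderTop = (ψ : WithTop Φ))
    (a : HahnSeries Γ k) (ha0 : a ≠ 0) (haord : a.order = α) :
    ∃ m : HahnSeries Γ k,
      m = HahnSeries.single (α - θ ψ)
            (a.leadingCoeff /
              (ι ((H.e (α - θ ψ)).coeff ψ) * (logDer H D ψ).leadingCoeff)) ∧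
      m ≠ 0 ∧ a.orderTop < (D m - a).orderTop := by
  set β := α - θ ψ with hβ
  have heβ : H.e β ≠ 0 := orderTop_ne_top.1 (by rw [hψ]; exact WithTop.coe_ne_top)
  have hβne : β ≠ 0 := fun h => heβ (by rw [h, map_zero])
  set c := (logDer H D ψ).leadingCoeff with hcdef
  set g0 := ι ((H.e β).coeff ψ) with hg0
  have hprod : g0 * c ≠ 0 := Dsingle_lead_ne H ι D θ hD hθ hβne hψ
  have hlc : a.leadingCoeff ≠ 0 := leadingCoeff_ne_zero.2 ha0
  set x := a.leadingCoeff / (g0 * c) with hxdef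
  have hxne : x ≠ 0 := div_ne_zero hlc hprod
  refine ⟨_, rfl, single_ne_zero hxne, ?_⟩
  obtain ⟨s, hs, hDm⟩ := hD.1.strong_linear (HahnSeries.single β x)
  have hDcoeff : ∀ g, (D (HahnSeries.single β x)).coeff g
      = x * (D (HahnSeries.single β (1:k))).coeff g := by
    intro g
    rw [hDm, SummableFamily.coeff_hsum,
      finsum_eq_single _ β
        (fun γ' hγ' => by rw [hs γ', coeff_single_of_ne hγ', zero_smul, coeff_zero]),
      hs β, coeff_single_same, HahnSeries.coeff_smul, smul_eq_mul]
  have hα_eq : β + θ ψ = α := by rw [hβ]; abel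
  have haT : a.orderTop = (α : WithTop Γ) := by rw [← order_eq_orderTop_of_ne_zero ha0, haord]
  rw [haT]
  apply lt_orderTop
  intro g hg
  rw [coeff_sub, hDcoeff]
  rcases lt_or_eq_of_le hg with hlt | rfl
  · rw [Dsingle_coeff_zero H ι D θ hD hθ hβne hψ (by rw [hα_eq]; exact hlt), mul_zero,
      coeff_eq_zero_of_lt_orderTop (x := a) (by rw [haT]; exact_mod_cast hlt)]
    norm_num
  · rw [← hα_eq, Dsingle_coeff_lead H ι D θ hD hθ hβne hψ, ← hg0, ← hcdef, hxdef,
      div_mul_cancel₀ _ hprod, hα_eq, ← haord, ← leadingCoeff_eq, sub_self]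

end MAI

end MAI

/-- monomial asymptotic integration.  Let `θ_φ = v(d(t_φ)/t_φ)` and let
`α ∈ Γ` differ from `θ̃ = l.u.b.{θ_φ}`.  Then there is a unique `ψ_α ∈ Φ` with
`v_Γ(α − θ_{ψ_α}) = ψ_α`, and every series `a` with `v(a) = α` and leading coefficient
`a_α` admits the monomial `(a_α/(γ₀ c_{ψ_α})) t^{α − θ_{ψ_α}}` as an asymptotic integral,
where `γ₀` is the coefficient of `1_{ψ_α}` in `α − θ_{ψ_α}` and `c_{ψ_α}` is the leading
coefficient of `d(t_{ψ_α})/t_{ψ_α}`. -/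
theorem monomial_asymptotic_integral {Φ : Type*} [LinearOrder Φ]
    {Γ : Type*} [AddCommGroup Γ] [LinearOrder Γ] [IsOrderedAddMonoid Γ] {k : Type*} [Field k]
    (H : HahnEmbeddingData Φ Γ) (ι : ℝ →+* k)
    (D : HahnSeries Γ k → HahnSeries Γ k) (hD : IsHardySeriesDerivation H ι D)
    (θ : Φ → Γ) (hθ : ∀ φ, (logDer H D φ).orderTop = ((θ φ : Γ) : WithTop Γ))
    (α : Γ) (hα : ¬ IsLUB (Set.range θ) α) :
    (∃! ψ : Φ, (H.e (α - θ ψ)).orderTop = ((ψ : Φ) : WithTop Φ)) ∧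
    (∀ ψ : Φ, (H.e (α - θ ψ)).orderTop = ((ψ : Φ) : WithTop Φ) →
      ∀ a : HahnSeries Γ k, a ≠ 0 → a.order = α →
        ∃ m : HahnSeries Γ k,
          m = HahnSeries.single (α - θ ψ)
                (a.leadingCoeff /
                  (ι ((H.e (α - θ ψ)).coeff ψ) * (logDer H D ψ).leadingCoeff)) ∧
          m ≠ 0 ∧ a.orderTop < (D m - a).orderTop) := by
  obtain ⟨ψ, hψ⟩ := MAI.exists_psi H ι D θ hD hθ α hα
  constructor
  · exact ⟨ψ, hψ, fun y hy => MAI.psi_unique H ι D θ hD hθ hy hψ⟩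
  · intro ψ' hψ' a ha0 haord
    exact MAI.part2 H ι D θ hD hθ α ψ' hψ' a ha0 haord
end

section
/- Let k((Γ)) be endowed with a series derivation of Hardy type d, Γ a subgroup of the Hahn group Σ_{φ∈Φ} ℝ, θ_φ := v(d(t_φ)/t_φ), and θ̃ := l.u.b.{θ_φ : φ ∈ Φ}. Then every series a ∈ k((Γ)) with v(a) > θ̃ admits an integral in k((Γ)); moreover, k((Γ)) is closed under integration (every element has an integral) if and only if θ̃ ∉ Γ. -/
/- Common setting: a generalized series field `k((Γ))`, where the totally ordered abelian
group `Γ` is regarded, via Hahn's embedding theorem, as a subgroup of the Hahn group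
`Σ_{φ ∈ Φ} ℝ = HahnSeries Φ ℝ`, and the coefficient field `k` contains the real exponents
(via a ring homomorphism `ι : ℝ →+* k`). -/

open HahnSeries

noncomputable section Toolkit

open HahnSeries

variable {Φ : Type*} [LinearOrder Φ] {Γ : Type*} [AddCommGroup Γ] [LinearOrder Γ] [IsOrderedAddMonoid Γ]
  {k : Type*} [Field k]

/-- Pin down the order/leadingCoeff of a Hahn series from coefficient information. -/
theorem hahn_pin {A : Type*} [AddCommMonoid A] [LinearOrder A] [IsOrderedCancelAddMonoid A] {R : Type*} [Zero R]
    {x : HahnSeries A R} {d : A} (h1 : x.coeff d ≠ 0) (h2 : ∀ i, i < d → x.coeff i = 0) :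
    x ≠ 0 ∧ x.order = d ∧ x.orderTop = (d : WithTop A) ∧ x.leadingCoeff = x.coeff d := by
  have hx : x ≠ 0 := ne_zero_of_coeff_ne_zero h1
  have hod : x.order = d := by
    refine le_antisymm (order_le_of_coeff_ne_zero h1) ?_
    by_contra hlt
    exact (coeff_order_eq_zero.not.2 hx) (h2 _ (lt_of_not_ge hlt))
  refine ⟨hx, hod, ?_, ?_⟩
  · rw [← order_eq_orderTop_of_ne_zero hx, hod]
  · rw [leadingCoeff_eq, hod]

theorem orderTop_gt_of_coeff {x : HahnSeries Γ k} {d : Γ}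
    (h2 : ∀ i, i ≤ d → x.coeff i = 0) : (d : WithTop Γ) < x.orderTop := by
  by_cases hx : x = 0
  · simp [hx, orderTop_zero, WithTop.coe_lt_top]
  · rw [← order_eq_orderTop_of_ne_zero hx, WithTop.coe_lt_coe]
    by_contra hle
    exact (coeff_order_eq_zero.not.2 hx) (h2 _ (le_of_not_gt hle))

section Lead

variable [Nonempty Φ] (H : HahnEmbeddingData Φ Γ)

theorem e_ne_zero {γ : Γ} (hγ : γ ≠ 0) : H.e γ ≠ 0 := by
  intro h
  exact hγ (H.inj (by rw [h, map_zero]))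

/-- The leading (smallest) element of the support of `e γ`, i.e. the archimedean class. -/
def leadOf (γ : Γ) : Φ :=
  letI := Classical.propDecidable
  if h : H.e γ = 0 then Classical.arbitrary Φ
  else (H.e γ).isWF_support.min (support_nonempty_iff.2 h)

theorem leadOf_mem {γ : Γ} (hγ : γ ≠ 0) : leadOf H γ ∈ (H.e γ).support := by
  rw [leadOf]
  rw [dif_neg (e_ne_zero H hγ)]
  exact (H.e γ).isWF_support.min_mem _

theorem coeff_leadOf_ne_zero {γ : Γ} (hγ : γ ≠ 0) : (H.e γ).coeff (leadOf H γ) ≠ 0 :=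
  leadOf_mem H hγ

theorem coeff_eq_zero_of_lt_leadOf {γ : Γ} (hγ : γ ≠ 0) {χ : Φ} (h : χ < leadOf H γ) :
    (H.e γ).coeff χ = 0 := by
  by_contra hc
  rw [leadOf, dif_neg (e_ne_zero H hγ)] at h
  exact (H.e γ).isWF_support.not_lt_min _ hc h

theorem leadOf_le {γ : Γ} (hγ : γ ≠ 0) {χ : Φ} (h : (H.e γ).coeff χ ≠ 0) : leadOf H γ ≤ χ := by
  rw [leadOf, dif_neg (e_ne_zero H hγ)]
  exact (H.e γ).isWF_support.min_le _ h

theorem leadOf_pin {γ : Γ} {d : Φ} (h1 : (H.e γ).coeff d ≠ 0)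
    (h2 : ∀ χ, χ < d → (H.e γ).coeff χ = 0) : γ ≠ 0 ∧ leadOf H γ = d := by
  have hγ : γ ≠ 0 := by
    intro h
    rw [h, map_zero] at h1
    exact h1 rfl
  refine ⟨hγ, le_antisymm (leadOf_le H hγ h1) ?_⟩
  by_contra hlt
  exact coeff_leadOf_ne_zero H hγ (h2 _ (lt_of_not_ge hlt))

theorem pos_coeff_leadOf {γ : Γ} (hγ : 0 < γ) : 0 < (H.e γ).coeff (leadOf H γ) := by
  obtain ⟨φ, hpos, hbelow⟩ := (H.ord γ).1 hγ
  have : leadOf H γ = φ := (leadOf_pin H (ne_of_gt hpos) fun χ hχ => hbelow χ hχ).2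
  rw [this]; exact hpos

theorem pos_of_coeff {γ : Γ} {d : Φ} (h1 : 0 < (H.e γ).coeff d)
    (h2 : ∀ χ, χ < d → (H.e γ).coeff χ = 0) : 0 < γ ∧ γ ≠ 0 ∧ leadOf H γ = d := by
  have hp : 0 < γ := (H.ord γ).2 ⟨d, h1, fun ψ h => h2 ψ h⟩
  exact ⟨hp, (leadOf_pin H (ne_of_gt h1) h2).1, (leadOf_pin H (ne_of_gt h1) h2).2⟩

theorem leadOf_neg {γ : Γ} (hγ : γ ≠ 0) : leadOf H (-γ) = leadOf H γ := by
  refine (leadOf_pin H (d := leadOf H γ) ?_ ?_).2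
  · rw [map_neg, coeff_neg]
    simpa using coeff_leadOf_ne_zero H hγ
  · intro χ hχ
    rw [map_neg, coeff_neg, coeff_eq_zero_of_lt_leadOf H hγ hχ, neg_zero]

/-- Adding an element supported strictly above the lead does not change lead nor coefficient. -/
theorem add_lead {x y : Γ} (hx : x ≠ 0)
    (hy : ∀ χ, χ ≤ leadOf H x → (H.e y).coeff χ = 0) :
    x + y ≠ 0 ∧ leadOf H (x + y) = leadOf H x ∧
      (H.e (x + y)).coeff (leadOf H x) = (H.e x).coeff (leadOf H x) := by
  have hco : (H.e (x + y)).coeff (leadOf H x) = (H.e x).coeff (leadOf H x) := by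
    rw [map_add, coeff_add, hy _ le_rfl, add_zero]
  have h2 : ∀ χ, χ < leadOf H x → (H.e (x + y)).coeff χ = 0 := by
    intro χ hχ
    rw [map_add, coeff_add, hy _ hχ.le, add_zero, coeff_eq_zero_of_lt_leadOf H hx hχ]
  have := leadOf_pin H (hco ▸ coeff_leadOf_ne_zero H hx) h2
  exact ⟨this.1, this.2, hco⟩

theorem hy_of_lead_lt {x y : Γ} (hy : y ≠ 0) (h : leadOf H x < leadOf H y) :
    ∀ χ, χ ≤ leadOf H x → (H.e y).coeff χ = 0 := fun χ hχ =>
  coeff_eq_zero_of_lt_leadOf H hy (lt_of_le_of_lt hχ h)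

/-- Sum of two positive elements: the lead is the min of the leads. -/
theorem pos_add_lead {x y : Γ} (hx : 0 < x) (hy : 0 < y) :
    leadOf H (x + y) = min (leadOf H x) (leadOf H y) := by
  rcases lt_trichotomy (leadOf H x) (leadOf H y) with h | h | h
  · rw [min_eq_left h.le]
    exact (add_lead H hx.ne' (hy_of_lead_lt H hy.ne' h)).2.1
  · rw [min_eq_left h.le]
    refine (leadOf_pin H ?_ ?_).2
    · rw [map_add, coeff_add]
      have := add_pos (pos_coeff_leadOf H hx) (h ▸ pos_coeff_leadOf H hy)
      exact ne_of_gt this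
    · intro χ hχ
      rw [map_add, coeff_add, coeff_eq_zero_of_lt_leadOf H hx.ne' hχ,
        coeff_eq_zero_of_lt_leadOf H hy.ne' (h ▸ hχ), add_zero]
  · rw [min_eq_right h.le, add_comm]
    exact (add_lead H hy.ne' (hy_of_lead_lt H hx.ne' h)).2.1

/-- An element of strictly bigger archimedean class is smaller. -/
theorem lt_of_lead_lt {x y : Γ} (hx : 0 < x) (hy : 0 < y) (h : leadOf H x < leadOf H y) :
    y < x := by
  rw [← sub_pos]
  refine (pos_of_coeff H (d := leadOf H x) ?_ ?_).1
  · rw [map_sub, coeff_sub, coeff_eq_zero_of_lt_leadOf H hy.ne' h, sub_zero]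
    exact pos_coeff_leadOf H hx
  · intro χ hχ
    rw [map_sub, coeff_sub, coeff_eq_zero_of_lt_leadOf H hx.ne' hχ,
      coeff_eq_zero_of_lt_leadOf H hy.ne' (hχ.trans h), sub_zero]

theorem b_pos (φ : Φ) : 0 < H.b φ ∧ H.b φ ≠ 0 ∧ leadOf H (H.b φ) = φ := by
  have h1 : (H.e (H.b φ)).coeff φ = 1 := by rw [H.hb, coeff_single_same]
  have h2 : ∀ χ, χ < φ → (H.e (H.b φ)).coeff χ = 0 := by
    intro χ hχ
    rw [H.hb, coeff_single_of_ne (ne_of_lt hχ)]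
  exact pos_of_coeff H (h1 ▸ one_pos) h2

theorem b_lt_b {ψ φ : Φ} (h : ψ < φ) : H.b φ < H.b ψ := by
  refine lt_of_lead_lt H (b_pos H ψ).1 (b_pos H φ).1 ?_
  rw [(b_pos H ψ).2.2, (b_pos H φ).2.2]; exact h

theorem not_arch {ψ φ : Φ} (h : ψ < φ) : ¬ ArchEquiv (H.b ψ) (H.b φ) := by
  rintro ⟨n, hn, -⟩
  have hco : ∀ χ : Φ, (H.e (H.b ψ - n • H.b φ)).coeff χ
      = (single ψ (1:ℝ)).coeff χ - n • (single φ (1:ℝ)).coeff χ := by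
    intro χ
    rw [map_sub, map_nsmul, coeff_sub, coeff_nsmul, H.hb, H.hb, Pi.smul_apply]
  have h1 : 0 < H.b ψ - n • H.b φ := by
    refine (pos_of_coeff H (d := ψ) ?_ ?_).1
    · rw [hco, coeff_single_same, coeff_single_of_ne (ne_of_lt h), smul_zero, sub_zero]
      exact one_pos
    · intro χ hχ
      rw [hco, coeff_single_of_ne (ne_of_lt hχ),
        coeff_single_of_ne (ne_of_lt (hχ.trans h)), smul_zero, sub_zero]
  rw [abs_of_pos (b_pos H ψ).1, abs_of_pos (b_pos H φ).1] at hn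
  rw [sub_pos] at h1
  exact absurd hn (not_le_of_gt h1)

end Lead

end Toolkit

noncomputable section Deriv

open HahnSeries

variable {Φ : Type*} [LinearOrder Φ] [Nonempty Φ] {Γ : Type*} [AddCommGroup Γ] [LinearOrder Γ] [IsOrderedAddMonoid Γ]
  {k : Type*} [Field k]
variable (H : HahnEmbeddingData Φ Γ) (ι : ℝ →+* k) (D : HahnSeries Γ k → HahnSeries Γ k)
  (θ : Φ → Γ)

omit [Nonempty Φ] in
theorem iota_inj : Function.Injective ι := ι.injective

section basic

variable (hD : IsHardySeriesDerivation H ι D)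

include hD

omit [Nonempty Φ] in
theorem D_zero : D 0 = 0 := by
  have h := hD.1.map_add 0 0
  rw [add_zero] at h
  exact left_eq_add.1 h

omit [Nonempty Φ] in
theorem D_one : D 1 = 0 := by
  have h := hD.1.leibniz 1 1
  rw [mul_one, one_mul, mul_one] at h
  exact left_eq_add.1 h

omit [Nonempty Φ] in
theorem hsum_single_support {α : Type*} (s : SummableFamily Γ k α) (a : α)
    (h : ∀ x, x ≠ a → s x = 0) : s.hsum = s a := by
  ext δ
  rw [SummableFamily.coeff_hsum]
  exact finsum_eq_single _ a fun x hx => by rw [h x hx]; rfl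

omit [Nonempty Φ] in
theorem D_single_smul (γ : Γ) (c : k) : D (single γ c) = c • D (single γ 1) := by
  obtain ⟨s, hs, hDx⟩ := hD.1.strong_linear (single γ c)
  have h0 : ∀ x, x ≠ γ → s x = 0 := by
    intro x hx
    rw [hs x, coeff_single_of_ne hx, zero_smul]
  rw [hDx, hsum_single_support H ι D hD s γ h0, hs γ, coeff_single_same]

end basic

variable (hD : IsHardySeriesDerivation H ι D)
variable (hθ : ∀ φ, (logDer H D φ).orderTop = ((θ φ : Γ) : WithTop Γ))

include hD hθ

theorem theta_lt {ψ φ : Φ} (h : ψ < φ) : θ ψ < θ φ := by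
  have hd3 := hD.2.2.2 (tmon H k ψ) (tmon H k φ)
    (single_ne_zero one_ne_zero) (single_ne_zero one_ne_zero)
  rw [show (tmon H k ψ).order = H.b ψ from order_single one_ne_zero,
    show (tmon H k φ).order = H.b φ from order_single one_ne_zero] at hd3
  have hbψ := (b_pos H ψ).1
  have hbφ := (b_pos H φ).1
  have habs : |H.b φ| < |H.b ψ| := by
    rw [abs_of_pos hbψ, abs_of_pos hbφ]; exact b_lt_b H h
  have h3 := hd3 habs (by rw [abs_of_pos hbφ]; exact hbφ)
  have hle : (logDer H D ψ).orderTop ≤ (logDer H D φ).orderTop := h3.1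
  rw [hθ ψ, hθ φ, WithTop.coe_le_coe] at hle
  rcases lt_or_eq_of_le hle with h' | h'
  · exact h'
  · exfalso
    have heq : (logDer H D ψ).orderTop = (logDer H D φ).orderTop := by
      rw [hθ ψ, hθ φ, h']
    exact not_arch H h (h3.2.1 heq)

theorem theta_mono {ψ φ : Φ} (h : ψ ≤ φ) : θ ψ ≤ θ φ := by
  rcases lt_or_eq_of_le h with h' | h'
  · exact (theta_lt H ι D θ hD hθ h').le
  · rw [h']

theorem logDer_coeff_zero (φ : Φ) {q : Γ} (hq : q < θ φ) : (logDer H D φ).coeff q = 0 := by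
  refine coeff_eq_zero_of_lt_orderTop ?_
  rw [hθ φ]
  exact_mod_cast hq

theorem logDer_coeff_ne (φ : Φ) : (logDer H D φ).coeff (θ φ) ≠ 0 :=
  coeff_orderTop_ne (hθ φ)

/-- The leading coefficient unit attached to the class of `γ`. -/
def uCoef (γ : Γ) : k :=
  ι ((H.e γ).coeff (leadOf H γ)) * (logDer H D (leadOf H γ)).coeff (θ (leadOf H γ))

theorem uCoef_ne_zero {γ : Γ} (hγ : γ ≠ 0) : uCoef H ι D θ γ ≠ 0 := by
  refine mul_ne_zero (fun h => coeff_leadOf_ne_zero H hγ (iota_inj ι ?_))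
    (logDer_coeff_ne H ι D θ hD hθ (leadOf H γ))
  rw [h, map_zero]

theorem dSingle {γ : Γ} (hγ : γ ≠ 0) :
    D (single γ (1:k)) ≠ 0 ∧
    (D (single γ (1:k))).order = γ + θ (leadOf H γ) ∧
    (D (single γ (1:k))).orderTop = ((γ + θ (leadOf H γ) : Γ) : WithTop Γ) ∧
    (D (single γ (1:k))).coeff (γ + θ (leadOf H γ)) = uCoef H ι D θ γ ∧
    ∀ δ, δ < γ + θ (leadOf H γ) → (D (single γ (1:k))).coeff δ = 0 := by
  obtain ⟨s, hs, hDs⟩ := hD.1.strong_leibniz γ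
  have hcoeff : ∀ δ : Γ, (D (single γ (1:k))).coeff δ =
      ∑ᶠ φ, ι ((H.e γ).coeff φ) * (logDer H D φ).coeff (δ - γ) := by
    intro δ
    rw [hDs, SummableFamily.coeff_hsum]
    refine finsum_congr fun φ => ?_
    rw [hs φ, coeff_smul, smul_eq_mul]
    have hδ : (δ - γ) + γ = δ := by abel
    have hsm := coeff_single_mul_add (r := (1:k)) (x := logDer H D φ) (a := δ - γ) (b := γ)
    rw [hδ] at hsm
    rw [hsm, one_mul]
  have hlow : ∀ δ, δ < γ + θ (leadOf H γ) → (D (single γ (1:k))).coeff δ = 0 := by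
    intro δ hδ
    rw [hcoeff δ]
    refine finsum_eq_zero_of_forall_eq_zero fun φ => ?_
    by_cases hc : (H.e γ).coeff φ = 0
    · rw [hc, map_zero, zero_mul]
    · have hψφ : leadOf H γ ≤ φ := leadOf_le H hγ hc
      have h1 : δ < γ + θ φ :=
        lt_of_lt_of_le hδ (add_le_add_right (theta_mono H ι D θ hD hθ hψφ) γ)
      have h2 : δ - γ < θ φ := by
        have := sub_lt_sub_right h1 γ
        rwa [show γ + θ φ - γ = θ φ by abel] at this
      rw [logDer_coeff_zero H ι D θ hD hθ φ h2, mul_zero]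
  have hval : (D (single γ (1:k))).coeff (γ + θ (leadOf H γ)) = uCoef H ι D θ γ := by
    rw [hcoeff]
    have hsub : γ + θ (leadOf H γ) - γ = θ (leadOf H γ) := by abel
    rw [hsub]
    rw [finsum_eq_single _ (leadOf H γ) ?_]
    · rfl
    · intro φ hφ
      by_cases hc : (H.e γ).coeff φ = 0
      · rw [hc, map_zero, zero_mul]
      · have hψφ : leadOf H γ < φ := lt_of_le_of_ne (leadOf_le H hγ hc) (Ne.symm hφ)
        rw [logDer_coeff_zero H ι D θ hD hθ φ (theta_lt H ι D θ hD hθ hψφ), mul_zero]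
  have hne : (D (single γ (1:k))).coeff (γ + θ (leadOf H γ)) ≠ 0 := by
    rw [hval]; exact uCoef_ne_zero H ι D θ hD hθ hγ
  obtain ⟨h1, h2, h3, -⟩ := hahn_pin hne fun i hi => hlow i hi
  exact ⟨h1, h2, h3, hval, hlow⟩

/-- `v(D x) = v(x) + θ_{class of v(x)}` for any nonzero `x` with nonzero order. -/
theorem dPin {x : HahnSeries Γ k} (hx : x ≠ 0) (hxo : x.order ≠ 0) :
    (D x).orderTop = ((x.order + θ (leadOf H x.order) : Γ) : WithTop Γ) := by
  have h2 := hD.2.2.1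
  have hsing : (single x.order (1:k)) ≠ 0 := single_ne_zero one_ne_zero
  have hordsing : (single x.order (1:k)).order = x.order := order_single one_ne_zero
  have hoteq : x.orderTop = (single x.order (1:k)).orderTop := by
    rw [orderTop_single one_ne_zero, ← order_eq_orderTop_of_ne_zero hx]
  have hA := (h2 x (single x.order 1) hx hsing hxo (by rw [hordsing]; exact hxo)).mp hoteq.le
  have hB := (h2 (single x.order 1) x hsing hx (by rw [hordsing]; exact hxo) hxo).mp hoteq.ge
  have := le_antisymm hA hB
  rw [this, (dSingle H ι D θ hD hθ hxo).2.2.1]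

theorem TvMono {γ γ' : Γ} (hγ : γ ≠ 0) (hγ' : γ' ≠ 0) :
    γ ≤ γ' ↔ γ + θ (leadOf H γ) ≤ γ' + θ (leadOf H γ') := by
  have h2 := hD.2.2.1 (single γ (1:k)) (single γ' (1:k))
    (single_ne_zero one_ne_zero) (single_ne_zero one_ne_zero)
    (by rw [order_single one_ne_zero]; exact hγ) (by rw [order_single one_ne_zero]; exact hγ')
  rw [orderTop_single one_ne_zero, orderTop_single one_ne_zero,
    (dSingle H ι D θ hD hθ hγ).2.2.1, (dSingle H ι D θ hD hθ hγ').2.2.1,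
    WithTop.coe_le_coe, WithTop.coe_le_coe] at h2
  exact h2

theorem TvStrictMono {γ γ' : Γ} (hγ : γ ≠ 0) (hγ' : γ' ≠ 0) (h : γ < γ') :
    γ + θ (leadOf H γ) < γ' + θ (leadOf H γ') := by
  rcases lt_or_eq_of_le ((TvMono H ι D θ hD hθ hγ hγ').mp h.le) with h' | h'
  · exact h'
  · exfalso
    have := (TvMono H ι D θ hD hθ hγ' hγ).mpr h'.ge
    exact absurd h (not_lt_of_ge this)

end Deriv

noncomputable section Cut

open HahnSeries

variable {Φ : Type*} [LinearOrder Φ] [Nonempty Φ] {Γ : Type*} [AddCommGroup Γ] [LinearOrder Γ] [IsOrderedAddMonoid Γ]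
  {k : Type*} [Field k]
variable (H : HahnEmbeddingData Φ Γ) (ι : ℝ →+* k) (D : HahnSeries Γ k → HahnSeries Γ k)
  (θ : Φ → Γ)
variable (hD : IsHardySeriesDerivation H ι D)
variable (hθ : ∀ φ, (logDer H D φ).orderTop = ((θ φ : Γ) : WithTop Γ))

include hD hθ

theorem key_iff {ψ φ : Φ} (hψφ : ψ < φ) {η : Γ} (hη : η ≠ 0) (hl : leadOf H η = ψ) :
    0 ≤ η ↔ θ φ - θ ψ ≤ η := by
  have hbφ := b_pos H φ
  have hvan : ∀ χ, χ ≤ leadOf H η → (H.e (H.b φ)).coeff χ = 0 := by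
    refine hy_of_lead_lt H hbφ.2.1 ?_
    rw [hl, hbφ.2.2]; exact hψφ
  obtain ⟨hγne, hγlead, -⟩ := add_lead H hη hvan
  have hTv := TvMono H ι D θ hD hθ hbφ.2.1 hγne
  rw [hγlead, hl, hbφ.2.2] at hTv
  constructor
  · intro h
    have h1 : H.b φ ≤ η + H.b φ := le_add_of_nonneg_left h
    have h2 := hTv.mp h1
    -- H.b φ + θ φ ≤ η + H.b φ + θ ψ
    have h3 : θ φ + H.b φ ≤ (η + θ ψ) + H.b φ := by
      calc θ φ + H.b φ = H.b φ + θ φ := by abel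
      _ ≤ η + H.b φ + θ ψ := h2
      _ = (η + θ ψ) + H.b φ := by abel
    have h4 : θ φ ≤ η + θ ψ := le_of_add_le_add_right h3
    rwa [sub_le_iff_le_add]
  · intro h
    rw [sub_le_iff_le_add] at h
    have h3 : θ φ + H.b φ ≤ (η + θ ψ) + H.b φ := add_le_add_left h _
    have h2 : H.b φ + θ φ ≤ η + H.b φ + θ ψ := by
      calc H.b φ + θ φ = θ φ + H.b φ := by abel
      _ ≤ (η + θ ψ) + H.b φ := h3
      _ = η + H.b φ + θ ψ := by abel
    have h1 := hTv.mpr h2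
    exact (le_add_iff_nonneg_left _).1 h1

theorem star {ψ φ : Φ} (hψφ : ψ < φ) :
    θ φ - θ ψ ≠ 0 ∧ ψ < leadOf H (θ φ - θ ψ) := by
  set ε := θ φ - θ ψ with hε
  have hεpos : 0 < ε := sub_pos.2 (theta_lt H ι D θ hD hθ hψφ)
  refine ⟨hεpos.ne', ?_⟩
  rcases lt_trichotomy (leadOf H ε) ψ with hlt | heq | hgt
  · exfalso
    have h1 : H.b ψ < ε := by
      refine lt_of_lead_lt H hεpos (b_pos H ψ).1 ?_
      rw [(b_pos H ψ).2.2]; exact hlt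
    have h2 : ε ≤ H.b ψ := by
      refine (key_iff H ι D θ hD hθ hψφ (b_pos H ψ).2.1 (b_pos H ψ).2.2).1 (b_pos H ψ).1.le
    exact absurd h1 (not_lt_of_ge h2)
  · exfalso
    have hvan : ∀ χ, χ ≤ leadOf H ε → (H.e (-H.b φ)).coeff χ = 0 := by
      intro χ hχ
      rw [map_neg, coeff_neg, H.hb, coeff_single_of_ne (ne_of_lt (by
        calc χ ≤ leadOf H ε := hχ
        _ = ψ := heq
        _ < φ := hψφ)), neg_zero]
    obtain ⟨hηne, hηlead, hηco⟩ := add_lead H hεpos.ne' hvan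
    have hη : ε + -H.b φ = ε - H.b φ := by abel
    rw [hη] at hηne hηlead hηco
    have hηpos : 0 < ε - H.b φ := by
      refine (pos_of_coeff H (d := leadOf H ε) ?_ ?_).1
      · rw [hηco]; exact pos_coeff_leadOf H hεpos
      · intro χ hχ
        rw [map_sub, coeff_sub, coeff_eq_zero_of_lt_leadOf H hεpos.ne' hχ, zero_sub,
          H.hb, coeff_single_of_ne (ne_of_lt (lt_trans (lt_of_lt_of_le hχ le_rfl)
            (heq ▸ hψφ))), neg_zero]
    have hkey := (key_iff H ι D θ hD hθ hψφ hηne (by rw [hηlead, heq])).1 hηpos.le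
    -- ε ≤ ε - H.b φ
    have h6 := add_le_add_left hkey (H.b φ)
    rw [show ε - H.b φ + H.b φ = ε by abel] at h6
    have h7 : ε + H.b φ ≤ ε := by
      calc ε + H.b φ = (θ φ - θ ψ) + H.b φ := by rw [hε]
      _ ≤ ε := h6
    have h8 : H.b φ ≤ 0 := (add_le_iff_nonpos_right _).1 h7
    exact absurd h8 (not_le_of_gt (b_pos H φ).1)
  · exact hgt

/-- Solvability of `δ`: some `γ = δ - θ ψ` of class `ψ` integrates the monomial at `δ`. -/
def SolP (δ : Γ) : Prop := ∃ ψ : Φ, δ - θ ψ ≠ 0 ∧ leadOf H (δ - θ ψ) = ψ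

omit hD hθ in
theorem SolP_def {δ : Γ} (h : SolP H θ δ) :
    ∃ ψ : Φ, δ - θ ψ ≠ 0 ∧ leadOf H (δ - θ ψ) = ψ := h

theorem descend {δ : Γ} {ψ χ : Φ} (h0 : δ - θ ψ ≠ 0) (hl : leadOf H (δ - θ ψ) = χ)
    (hχ : χ < ψ) : SolP H θ δ := by
  have hy := star H ι D θ hD hθ hχ
  have hvan : ∀ χ', χ' ≤ leadOf H (δ - θ ψ) → (H.e (θ ψ - θ χ)).coeff χ' = 0 := by
    intro χ' hχ'
    exact coeff_eq_zero_of_lt_leadOf H hy.1 (lt_of_le_of_lt (hl ▸ hχ') hy.2)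
  obtain ⟨hne, hlead, -⟩ := add_lead H h0 hvan
  have heq : (δ - θ ψ) + (θ ψ - θ χ) = δ - θ χ := by abel
  rw [heq] at hne hlead
  exact ⟨χ, hne, by rw [hlead, hl]⟩

theorem solP_of_margin {u₀ δ : Γ} (hub : ∀ φ', θ φ' ≤ u₀) (hlt : u₀ < δ) : SolP H θ δ := by
  set x := δ - u₀ with hx
  have hxpos : 0 < x := sub_pos.2 hlt
  set ρ := leadOf H x with hρ
  by_cases hcase : θ ρ = u₀
  · exact ⟨ρ, by rw [hcase]; exact hxpos.ne', by rw [hcase]⟩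
  · have hypos : 0 < u₀ - θ ρ := sub_pos.2 (lt_of_le_of_ne (hub ρ) hcase)
    have hsum : δ - θ ρ = x + (u₀ - θ ρ) := by rw [hx]; abel
    have hpos : 0 < δ - θ ρ := by rw [hsum]; exact add_pos hxpos hypos
    have hlead : leadOf H (δ - θ ρ) = min ρ (leadOf H (u₀ - θ ρ)) := by
      rw [hsum, pos_add_lead H hxpos hypos]
    rcases le_or_gt ρ (leadOf H (u₀ - θ ρ)) with hle | hgt
    · exact ⟨ρ, hpos.ne', by rw [hlead, min_eq_left hle]⟩
    · refine descend H ι D θ hD hθ hpos.ne' (by rw [hlead, min_eq_right hgt.le]) hgt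

theorem solP_of_not_lub (hnl : ¬ ∃ g : Γ, IsLUB (Set.range θ) g) (δ : Γ) : SolP H θ δ := by
  by_cases hub : ∀ φ', θ φ' ≤ δ
  · have hδub : δ ∈ upperBounds (Set.range θ) := by rintro _ ⟨φ', rfl⟩; exact hub φ'
    have hnlub : ¬ δ ∈ lowerBounds (upperBounds (Set.range θ)) := fun h =>
      hnl ⟨δ, hδub, h⟩
    have h2 : ∃ u₀ ∈ upperBounds (Set.range θ), ¬ δ ≤ u₀ := by
      by_contra hcon
      push_neg at hcon
      exact hnlub fun u hu => hcon u hu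
    obtain ⟨u₀, hu₀, hltu⟩ := h2
    exact solP_of_margin H ι D θ hD hθ (fun φ' => hu₀ ⟨φ', rfl⟩) (lt_of_not_ge hltu)
  · push_neg at hub
    obtain ⟨φ₁, hφ₁⟩ := hub
    have hx₁ : δ - θ φ₁ ≠ 0 := sub_ne_zero.2 (ne_of_lt hφ₁)
    rcases lt_trichotomy (leadOf H (δ - θ φ₁)) φ₁ with hlt | heq | hgt
    · exact descend H ι D θ hD hθ hx₁ rfl hlt
    · exact ⟨φ₁, hx₁, heq⟩
    · set ρ := leadOf H (δ - θ φ₁) with hρdef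
      have hxpos : 0 < θ φ₁ - δ := sub_pos.2 hφ₁
      have hxlead : leadOf H (θ φ₁ - δ) = ρ := by
        rw [show θ φ₁ - δ = -(δ - θ φ₁) by abel, leadOf_neg H hx₁]
      have hypos : 0 < θ ρ - θ φ₁ := sub_pos.2 (theta_lt H ι D θ hD hθ hgt)
      have hstar := star H ι D θ hD hθ hgt
      set s := leadOf H (θ ρ - θ φ₁) with hsdef
      have hsum : θ ρ - δ = (θ φ₁ - δ) + (θ ρ - θ φ₁) := by abel
      have hpos : 0 < θ ρ - δ := by rw [hsum]; exact add_pos hxpos hypos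
      have hlead : leadOf H (θ ρ - δ) = min ρ s := by
        rw [hsum, pos_add_lead H hxpos hypos, hxlead]
      have hne : δ - θ ρ ≠ 0 := by
        intro h
        rw [show δ - θ ρ = -(θ ρ - δ) by abel] at h
        exact hpos.ne' (by rwa [neg_eq_zero] at h)
      have hlead' : leadOf H (δ - θ ρ) = min ρ s := by
        rw [show δ - θ ρ = -(θ ρ - δ) by abel, leadOf_neg H hpos.ne', hlead]
      rcases le_or_gt ρ s with hle | hgt'
      · exact ⟨ρ, hne, by rw [hlead', min_eq_left hle]⟩
      · refine descend H ι D θ hD hθ hne (by rw [hlead', min_eq_right hgt'.le]) ?_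
        calc s < ρ := hgt'
        
end Cut

noncomputable section Engine

open HahnSeries

variable {Φ : Type*} [LinearOrder Φ] [Nonempty Φ] {Γ : Type*} [AddCommGroup Γ] [LinearOrder Γ] [IsOrderedAddMonoid Γ]
  {k : Type*} [Field k]
variable (H : HahnEmbeddingData Φ Γ) (ι : ℝ →+* k) (D : HahnSeries Γ k → HahnSeries Γ k)
  (θ : Φ → Γ)

/-- A choice of class solving `γ + θ_{class γ} = δ`. -/
def psF (δ : Γ) : Φ :=
  letI := Classical.propDecidable
  if h : SolP H θ δ then h.choose else Classical.arbitrary Φ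

def gmF (δ : Γ) : Γ := δ - θ (psF H θ δ)

theorem gm_spec {δ : Γ} (h : SolP H θ δ) :
    gmF H θ δ ≠ 0 ∧ leadOf H (gmF H θ δ) = psF H θ δ ∧
      gmF H θ δ + θ (leadOf H (gmF H θ δ)) = δ := by
  have hps : psF H θ δ = h.choose := by
    rw [psF]; simp only [h, dif_pos]
  have hspec := h.choose_spec
  refine ⟨?_, ?_, ?_⟩
  · rw [gmF, hps]; exact hspec.1
  · rw [gmF, hps]; exact hspec.2
  · rw [gmF, hps, hspec.2]; abel

variable (hD : IsHardySeriesDerivation H ι D)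
variable (hθ : ∀ φ, (logDer H D φ).orderTop = ((θ φ : Γ) : WithTop Γ))
include hD hθ

/-- Leading behaviour of the derivative of a general series supported away from `0`. -/
theorem dGen {x : HahnSeries Γ k} (hx : x ≠ 0) (h0 : ∀ γ ∈ x.support, γ ≠ 0) :
    (∀ δ, δ < x.order + θ (leadOf H x.order) → (D x).coeff δ = 0) ∧
    (D x).coeff (x.order + θ (leadOf H x.order)) = x.leadingCoeff * uCoef H ι D θ x.order := by
  set o := x.order with hodef
  set d := o + θ (leadOf H o) with hddef
  have homem : o ∈ x.support := by
    rw [HahnSeries.mem_support]; exact (coeff_order_eq_zero.not.2 hx)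
  have ho : o ≠ 0 := h0 o homem
  set tail := x - single o (x.coeff o) with htdef
  have hxdec : x = single o (x.coeff o) + tail := by rw [htdef]; abel
  have hDx : D x = D (single o (x.coeff o)) + D tail := by
    conv_lhs => rw [hxdec]
    rw [hD.1.map_add]
  have hsing := dSingle H ι D θ hD hθ ho
  have hsmul : D (single o (x.coeff o)) = x.coeff o • D (single o (1:k)) :=
    D_single_smul H ι D hD o _
  have htail : ∀ δ, δ ≤ d → (D tail).coeff δ = 0 := by
    by_cases ht : tail = 0
    · intro δ _
      rw [ht, D_zero H ι D hD, coeff_zero]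
    · have htsupp : tail.support ⊆ x.support := by
        intro γ hγ
        rw [HahnSeries.mem_support] at hγ ⊢
        by_cases hγo : γ = o
        · exfalso
          rw [htdef, coeff_sub, hγo, coeff_single_same, sub_self] at hγ
          exact hγ rfl
        · rw [htdef, coeff_sub, coeff_single_of_ne hγo, sub_zero] at hγ
          exact hγ
      have htomem : tail.order ∈ x.support :=
        htsupp (by rw [HahnSeries.mem_support]; exact (coeff_order_eq_zero.not.2 ht))
      have hto : tail.order ≠ 0 := h0 _ htomem
      have htone : tail.order ≠ o := by
        intro h
        have := (coeff_order_eq_zero.not.2 ht)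
        rw [h, htdef, coeff_sub, coeff_single_same, sub_self] at this
        exact this rfl
      have hlt : o < tail.order := by
        refine lt_of_le_of_ne (order_le_of_coeff_ne_zero ?_) (Ne.symm htone)
        rw [← HahnSeries.mem_support]; exact htomem
      have hTv : d < tail.order + θ (leadOf H tail.order) :=
        TvStrictMono H ι D θ hD hθ ho hto hlt
      have hpin := dPin H ι D θ hD hθ ht hto
      intro δ hδ
      refine coeff_eq_zero_of_lt_orderTop ?_
      rw [hpin, WithTop.coe_lt_coe]
      exact lt_of_le_of_lt hδ hTv
  constructor
  · intro δ hδ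
    rw [hDx, coeff_add, hsmul, coeff_smul, hsing.2.2.2.2 δ hδ, smul_zero,
      htail δ hδ.le, add_zero]
  · rw [hDx, coeff_add, hsmul, coeff_smul, hsing.2.2.2.1, htail d le_rfl, add_zero,
      smul_eq_mul, leadingCoeff_eq]

end Engine

noncomputable section Engine2

open HahnSeries

variable {Φ : Type*} [LinearOrder Φ] [Nonempty Φ] {Γ : Type*} [AddCommGroup Γ] [LinearOrder Γ] [IsOrderedAddMonoid Γ]
  {k : Type*} [Field k]
variable (H : HahnEmbeddingData Φ Γ) (ι : ℝ →+* k) (D : HahnSeries Γ k → HahnSeries Γ k)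
  (θ : Φ → Γ) (a : HahnSeries Γ k)

/-- The partial integrals. -/
def MSet : Set (HahnSeries Γ k) :=
  {b | (∀ γ ∈ b.support, γ ≠ 0) ∧ (a.order : WithTop Γ) ≤ (a - D b).orderTop}

/-- Required leading coefficient of the next correction. -/
def reqcF (b : HahnSeries Γ k) : k :=
  (a - D b).leadingCoeff / uCoef H ι D θ (gmF H θ ((a - D b).order))

/-- The extension relation on partial integrals. -/
def relF (b b' : HahnSeries Γ k) : Prop :=
  b = b' ∨ (a - D b ≠ 0 ∧ b' - b ≠ 0 ∧
    (b' - b).order = gmF H θ ((a - D b).order) ∧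
    (b' - b).leadingCoeff = reqcF H ι D θ a b)

theorem relF_refl (b : HahnSeries Γ k) : relF H ι D θ a b b := Or.inl rfl

variable (hD : IsHardySeriesDerivation H ι D)
variable (hθ : ∀ φ, (logDer H D φ).orderTop = ((θ φ : Γ) : WithTop Γ))
variable (hsol : ∀ δ : Γ, a.order ≤ δ → SolP H θ δ)

theorem err_facts (hsol : ∀ δ : Γ, a.order ≤ δ → SolP H θ δ) {b : HahnSeries Γ k}
    (hbM : b ∈ MSet D a) (hne : a - D b ≠ 0) :
    a.order ≤ (a - D b).order ∧ SolP H θ ((a - D b).order) := by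
  have h1 := hbM.2
  rw [← order_eq_orderTop_of_ne_zero hne, WithTop.coe_le_coe] at h1
  exact ⟨h1, hsol _ h1⟩

include hD hθ hsol

theorem reqcF_ne_zero {b : HahnSeries Γ k} (hbM : b ∈ MSet D a) (hne : a - D b ≠ 0) :
    reqcF H ι D θ a b ≠ 0 := by
  have hsp := gm_spec H θ (err_facts H D θ a hsol hbM hne).2
  exact div_ne_zero (leadingCoeff_ne_zero.2 hne) (uCoef_ne_zero H ι D θ hD hθ hsp.1)

theorem progress {b b' : HahnSeries Γ k} (hbM : b ∈ MSet D a)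
    (hb' : ∀ γ ∈ b'.support, γ ≠ 0) (h : relF H ι D θ a b b') (hne : b ≠ b') :
    ((a - D b).order : WithTop Γ) < (a - D b').orderTop ∧ b' ∈ MSet D a := by
  rcases h with rfl | ⟨h1, h2, h3, h4⟩
  · exact absurd rfl hne
  set x := b' - b with hxdef
  set e0 := a - D b with he0def
  set δ := e0.order with hδdef
  obtain ⟨hδle, hδsol⟩ := err_facts H D θ a hsol hbM h1
  obtain ⟨hg0, -, hgTv⟩ := gm_spec H θ hδsol
  have hsx : ∀ γ ∈ x.support, γ ≠ 0 := by
    intro γ hγ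
    rw [HahnSeries.mem_support, hxdef, coeff_sub] at hγ
    by_cases hb'c : b'.coeff γ = 0
    · refine hbM.1 γ ?_
      rw [HahnSeries.mem_support]
      intro hbc
      rw [hb'c, hbc, sub_self] at hγ
      exact hγ rfl
    · exact hb' γ (by rwa [HahnSeries.mem_support])
  have hdg := dGen H ι D θ hD hθ h2 hsx
  rw [h3] at hdg
  rw [hgTv] at hdg
  have hval : (D x).coeff δ = e0.leadingCoeff := by
    rw [hdg.2, h4, reqcF]
    exact div_mul_cancel₀ _ (uCoef_ne_zero H ι D θ hD hθ hg0)
  have herr' : a - D b' = e0 - D x := by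
    have hb'eq : b' = b + x := by rw [hxdef]; abel
    rw [he0def, hb'eq, hD.1.map_add]
    abel
  have hcz : ∀ δ', δ' ≤ δ → (a - D b').coeff δ' = 0 := by
    intro δ' hδ'
    rw [herr', coeff_sub]
    rcases lt_or_eq_of_le hδ' with hlt | heq
    · rw [coeff_eq_zero_of_lt_order hlt, hdg.1 δ' hlt, sub_self]
    · rw [heq, hval, leadingCoeff_eq, sub_self]
  have hgt := orderTop_gt_of_coeff hcz
  refine ⟨hgt, hb', le_trans ?_ hgt.le⟩
  exact WithTop.coe_le_coe.2 hδle

theorem rad_lt {b b' : HahnSeries Γ k} (hbM : b ∈ MSet D a)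
    (hb' : ∀ γ ∈ b'.support, γ ≠ 0) (h : relF H ι D θ a b b') (hne : b ≠ b')
    (he' : a - D b' ≠ 0) :
    (a - D b).order < (a - D b').order ∧
      gmF H θ ((a - D b).order) < gmF H θ ((a - D b').order) := by
  have hp := (progress H ι D θ a hD hθ hsol hbM hb' h hne).1
  rw [← order_eq_orderTop_of_ne_zero he', WithTop.coe_lt_coe] at hp
  refine ⟨hp, ?_⟩
  have he : a - D b ≠ 0 := by
    rcases h with rfl | ⟨h1, -⟩
    · exact absurd rfl hne
    · exact h1
  obtain ⟨hg0, -, hgTv⟩ := gm_spec H θ (err_facts H D θ a hsol hbM he).2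
  obtain ⟨hg0', -, hgTv'⟩ := gm_spec H θ
    (err_facts H D θ a hsol (progress H ι D θ a hD hθ hsol hbM hb' h hne).2 he').2
  by_contra hcon
  push_neg at hcon
  have := (TvMono H ι D θ hD hθ hg0' hg0).mp hcon
  rw [hgTv, hgTv'] at this
  exact absurd hp (not_lt_of_ge this)

theorem relF_trans {b b' b'' : HahnSeries Γ k} (hbM : b ∈ MSet D a)
    (hb'M : b' ∈ MSet D a) (hb'' : ∀ γ ∈ b''.support, γ ≠ 0)
    (h : relF H ι D θ a b b') (h' : relF H ι D θ a b' b'') : relF H ι D θ a b b'' := by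
  rcases eq_or_ne b b' with rfl | hne
  · exact h'
  rcases eq_or_ne b' b'' with rfl | hne'
  · exact h
  obtain ⟨h1, h2, h3, h4⟩ := h.resolve_left hne
  obtain ⟨h1', h2', h3', h4'⟩ := h'.resolve_left hne'
  have hradlt := rad_lt H ι D θ a hD hθ hsol hbM hb'M.1 (Or.inr ⟨h1, h2, h3, h4⟩) hne h1'
  have hsum : b'' - b = (b' - b) + (b'' - b') := by abel
  have hcoeff : (b'' - b).coeff (gmF H θ ((a - D b).order)) = (b' - b).leadingCoeff := by
    rw [hsum, coeff_add]
    have hz : (b'' - b').coeff (gmF H θ ((a - D b).order)) = 0 :=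
      coeff_eq_zero_of_lt_order (by rw [h3']; exact hradlt.2)
    rw [hz, add_zero, ← h3, ← leadingCoeff_eq]
  have hlow : ∀ i, i < gmF H θ ((a - D b).order) → (b'' - b).coeff i = 0 := by
    intro i hi
    rw [hsum, coeff_add, coeff_eq_zero_of_lt_order (by rw [h3]; exact hi),
      coeff_eq_zero_of_lt_order (by rw [h3']; exact hi.trans (h3 ▸ hradlt.2)), add_zero]
  have hcne : (b'' - b).coeff (gmF H θ ((a - D b).order)) ≠ 0 := by
    rw [hcoeff]
    exact leadingCoeff_ne_zero.2 h2
  obtain ⟨hne'', hord, -, hlc⟩ := hahn_pin hcne hlow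
  refine Or.inr ⟨h1, hne'', hord, ?_⟩
  rw [hlc, hcoeff, h4]

end Engine2

noncomputable section Engine3

open HahnSeries

variable {Φ : Type*} [LinearOrder Φ] [Nonempty Φ] {Γ : Type*} [AddCommGroup Γ] [LinearOrder Γ] [IsOrderedAddMonoid Γ]
  {k : Type*} [Field k]
variable (H : HahnEmbeddingData Φ Γ) (ι : ℝ →+* k) (D : HahnSeries Γ k → HahnSeries Γ k)
  (θ : Φ → Γ) (a : HahnSeries Γ k)
variable (hD : IsHardySeriesDerivation H ι D)
variable (hθ : ∀ φ, (logDer H D φ).orderTop = ((θ φ : Γ) : WithTop Γ))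
variable (hsol : ∀ δ : Γ, a.order ≤ δ → SolP H θ δ)

include hD hθ hsol

theorem chains_bounded (ha : a ≠ 0) (C : Set (HahnSeries Γ k)) (hCM : C ⊆ MSet D a)
    (hchain : IsChain (relF H ι D θ a) C) :
    ∃ ub ∈ MSet D a, ∀ b ∈ C, relF H ι D θ a b ub := by
  classical
  have hM0 : (0 : HahnSeries Γ k) ∈ MSet D a := by
    constructor
    · intro γ hγ
      rw [HahnSeries.mem_support, coeff_zero] at hγ
      exact absurd rfl hγ
    · rw [D_zero H ι D hD, sub_zero, ← order_eq_orderTop_of_ne_zero ha]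
  rcases C.eq_empty_or_nonempty with rfl | hCne
  · exact ⟨0, hM0, fun b hb => absurd hb (Set.notMem_empty b)⟩
  by_cases hmax : ∃ m ∈ C, ∀ b ∈ C, relF H ι D θ a b m
  · obtain ⟨m, hm, hub⟩ := hmax
    exact ⟨m, hCM hm, hub⟩
  push_neg at hmax
  have herr : ∀ b ∈ C, a - D b ≠ 0 := by
    intro b hb h0
    obtain ⟨b', hb', hnr⟩ := hmax b hb
    refine hnr ?_
    rcases eq_or_ne b' b with rfl | hne
    · exact relF_refl H ι D θ a b'
    · rcases hchain hb' hb hne with h | h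
      · exact h
      · rcases h with heq | ⟨h1, -⟩
        · exact absurd heq.symm hne
        · exact absurd h0 h1
  have hsucc : ∀ b ∈ C, ∃ b' ∈ C, b ≠ b' ∧ relF H ι D θ a b b' := by
    intro b hb
    obtain ⟨b', hb', hnr⟩ := hmax b hb
    have hne : b ≠ b' := by
      rintro rfl
      exact hnr (relF_refl H ι D θ a b)
    rcases hchain hb hb' hne with h | h
    · exact ⟨b', hb', hne, h⟩
    · exact absurd h hnr
  have hpairOrd : ∀ b ∈ C, ∀ b' ∈ C, b ≠ b' → relF H ι D θ a b b' →
      (b' - b).order = gmF H θ ((a - D b).order) ∧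
        (b' - b).leadingCoeff = reqcF H ι D θ a b ∧ b' - b ≠ 0 := by
    intro b hb b' hb' hne h
    obtain ⟨-, h2, h3, h4⟩ := h.resolve_left hne
    exact ⟨h3, h4, h2⟩
  have hradlt : ∀ b ∈ C, ∀ b' ∈ C, b ≠ b' → relF H ι D θ a b b' →
      gmF H θ ((a - D b).order) < gmF H θ ((a - D b').order) := by
    intro b hb b' hb' hne h
    exact (rad_lt H ι D θ a hD hθ hsol (hCM hb) (hCM hb').1 h hne (herr b' hb')).2
  have hagree : ∀ b ∈ C, ∀ b' ∈ C, ∀ γ : Γ, γ < gmF H θ ((a - D b).order) →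
      γ < gmF H θ ((a - D b').order) → b.coeff γ = b'.coeff γ := by
    have hcz : ∀ u v : HahnSeries Γ k, u ∈ C → v ∈ C → u ≠ v → relF H ι D θ a u v →
        ∀ γ : Γ, γ < gmF H θ ((a - D u).order) → u.coeff γ = v.coeff γ := by
      intro u v hu hv hneu hr γ hγ
      have h0 : (v - u).coeff γ = 0 := by
        refine coeff_eq_zero_of_lt_order ?_
        rw [(hpairOrd u hu v hv hneu hr).1]
        exact hγ
      rw [coeff_sub] at h0
      exact (sub_eq_zero.1 h0).symm
    intro b hb b' hb' γ h1 h2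
    rcases eq_or_ne b b' with rfl | hne
    · rfl
    rcases hchain hb hb' hne with h | h
    · exact hcz b b' hb hb' hne h γ h1
    · exact (hcz b' b hb' hb hne.symm h γ h2).symm
  set f : Γ → k := fun γ =>
    if h : ∃ b, b ∈ C ∧ γ < gmF H θ ((a - D b).order) then h.choose.coeff γ else 0 with hfdef
  have hfval : ∀ γ : Γ, ∀ b ∈ C, γ < gmF H θ ((a - D b).order) → f γ = b.coeff γ := by
    intro γ b hb hγ
    have hex : ∃ b, b ∈ C ∧ γ < gmF H θ ((a - D b).order) := ⟨b, hb, hγ⟩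
    rw [hfdef]
    simp only [dif_pos hex]
    exact hagree _ hex.choose_spec.1 b hb γ hex.choose_spec.2 hγ
  have hfsupp : ∀ γ : Γ, f γ ≠ 0 →
      ∃ b, b ∈ C ∧ γ < gmF H θ ((a - D b).order) ∧ b.coeff γ ≠ 0 := by
    intro γ hγ
    by_cases hex : ∃ b, b ∈ C ∧ γ < gmF H θ ((a - D b).order)
    · refine ⟨hex.choose, hex.choose_spec.1, hex.choose_spec.2, ?_⟩
      rw [← hfval γ _ hex.choose_spec.1 hex.choose_spec.2]
      exact hγ
    · rw [hfdef] at hγ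
      simp only [dif_neg hex] at hγ
      exact absurd rfl hγ
  have hwf : (Function.support f).IsWF := by
    rw [Set.isWF_iff_no_descending_seq]
    intro g hg hmem
    obtain ⟨b0, hb0, hrad0, -⟩ := hfsupp (g 0) (hmem 0)
    have hmem' : ∀ n : ℕ, g n ∈ b0.support := by
      intro n
      have hlt : g n < gmF H θ ((a - D b0).order) :=
        lt_of_le_of_lt (hg.antitone (Nat.zero_le n)) hrad0
      rw [HahnSeries.mem_support, ← hfval (g n) b0 hb0 hlt]
      exact hmem n
    have hb0wf := b0.isWF_support
    rw [Set.isWF_iff_no_descending_seq] at hb0wf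
    exact hb0wf g hg hmem'
  set ℓ : HahnSeries Γ k := ⟨f, hwf.isPWO⟩ with hldef
  have hlcoeff : ∀ γ, ℓ.coeff γ = f γ := fun γ => rfl
  have hxb : ∀ b ∈ C, b ≠ ℓ → (ℓ - b ≠ 0 ∧ (ℓ - b).order = gmF H θ ((a - D b).order) ∧
      (ℓ - b).leadingCoeff = reqcF H ι D θ a b) := by
    intro b hb hne
    obtain ⟨b', hb', hneb, hrel⟩ := hsucc b hb
    have hrlt := hradlt b hb b' hb' hneb hrel
    have hcoeffat : (ℓ - b).coeff (gmF H θ ((a - D b).order)) = reqcF H ι D θ a b := by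
      rw [coeff_sub, hlcoeff, hfval _ b' hb' hrlt]
      have h1 := hpairOrd b hb b' hb' hneb hrel
      have h2 : b'.coeff (gmF H θ ((a - D b).order)) - b.coeff (gmF H θ ((a - D b).order))
          = (b' - b).coeff (gmF H θ ((a - D b).order)) := (coeff_sub).symm
      rw [h2, ← h1.1, ← leadingCoeff_eq, h1.2.1]
    have hlow : ∀ i, i < gmF H θ ((a - D b).order) → (ℓ - b).coeff i = 0 := by
      intro i hi
      rw [coeff_sub, hlcoeff, hfval i b hb hi, sub_self]
    have hcne : (ℓ - b).coeff (gmF H θ ((a - D b).order)) ≠ 0 := by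
      rw [hcoeffat]
      exact reqcF_ne_zero H ι D θ a hD hθ hsol (hCM hb) (herr b hb)
    obtain ⟨hne0, hord, -, hlc⟩ := hahn_pin hcne hlow
    exact ⟨hne0, hord, by rw [hlc, hcoeffat]⟩
  have hlM : ℓ ∈ MSet D a := by
    constructor
    · intro γ hγ
      rw [HahnSeries.mem_support, hlcoeff] at hγ
      obtain ⟨b, hb, -, hbc⟩ := hfsupp γ hγ
      exact (hCM hb).1 γ (by rwa [HahnSeries.mem_support])
    · obtain ⟨b0, hb0⟩ := hCne
      rcases eq_or_ne b0 ℓ with heq | hne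
      · rw [← heq]
        exact (hCM hb0).2
      obtain ⟨hx0, hxord, -⟩ := hxb b0 hb0 hne
      have herr' : a - D ℓ = (a - D b0) - D (ℓ - b0) := by
        conv_lhs => rw [show ℓ = b0 + (ℓ - b0) by abel, hD.1.map_add]
        abel
      have hsolδ := (err_facts H D θ a hsol (hCM hb0) (herr b0 hb0)).2
      have hxo : (ℓ - b0).order ≠ 0 := by
        rw [hxord]
        exact (gm_spec H θ hsolδ).1
      have hDxval : (D (ℓ - b0)).orderTop = (((a - D b0).order : Γ) : WithTop Γ) := by
        rw [dPin H ι D θ hD hθ hx0 hxo, hxord]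
        rw [(gm_spec H θ hsolδ).2.2]
      have hmin : min ((a - D b0).orderTop) ((D (ℓ - b0)).orderTop) ≤ (a - D ℓ).orderTop := by
        rw [herr']
        exact min_orderTop_le_orderTop_sub
      refine le_trans (le_min (hCM hb0).2 ?_) hmin
      rw [hDxval, WithTop.coe_le_coe]
      exact (err_facts H D θ a hsol (hCM hb0) (herr b0 hb0)).1
  refine ⟨ℓ, hlM, fun b hb => ?_⟩
  rcases eq_or_ne b ℓ with heq | hne
  · exact Or.inl heq
  · obtain ⟨h1, h2, h3⟩ := hxb b hb hne
    exact Or.inr ⟨herr b hb, h1, h2, h3⟩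

theorem integral_exists (ha : a ≠ 0) : ∃ b : HahnSeries Γ k, b ≠ 0 ∧ D b = a := by
  classical
  have hzorn := exists_maximal_of_chains_bounded
    (r := fun p q : ↥(MSet D a) => relF H ι D θ a p.1 q.1)
    (fun c hc => ?_) (fun {p q r} hpq hqr => ?_)
  rotate_left
  · -- chains bounded
    have himg : Subtype.val '' c ⊆ MSet D a := by
      rintro _ ⟨p, -, rfl⟩
      exact p.2
    have hchain : IsChain (relF H ι D θ a) (Subtype.val '' c) := by
      rintro _ ⟨p, hp, rfl⟩ _ ⟨q, hq, rfl⟩ hne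
      have hpq : p ≠ q := fun h => hne (by rw [h])
      rcases hc hp hq hpq with h | h
      · exact Or.inl h
      · exact Or.inr h
    obtain ⟨ub, hubM, hub⟩ := chains_bounded H ι D θ a hD hθ hsol ha _ himg hchain
    exact ⟨⟨ub, hubM⟩, fun p hp => hub p.1 ⟨p, hp, rfl⟩⟩
  · -- transitivity
    exact relF_trans H ι D θ a hD hθ hsol p.2 q.2 r.2.1 hpq hqr
  obtain ⟨m, hm⟩ := hzorn
  by_cases h0 : a - D m.1 = 0
  · refine ⟨m.1, ?_, (sub_eq_zero.1 h0).symm⟩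
    intro hm0
    rw [hm0, D_zero H ι D hD, sub_zero] at h0
    exact ha h0
  · exfalso
    set δ := (a - D m.1).order with hδdef
    obtain ⟨hδle, hδsol⟩ := err_facts H D θ a hsol m.2 h0
    obtain ⟨hg0, -, -⟩ := gm_spec H θ hδsol
    have hreq := reqcF_ne_zero H ι D θ a hD hθ hsol m.2 h0
    set m' := m.1 + single (gmF H θ δ) (reqcF H ι D θ a m.1) with hm'def
    have hdiff : m' - m.1 = single (gmF H θ δ) (reqcF H ι D θ a m.1) := by
      rw [hm'def]; abel
    have hsne : single (gmF H θ δ) (reqcF H ι D θ a m.1) ≠ 0 := single_ne_zero hreq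
    have hne : m.1 ≠ m' := by
      intro h
      rw [← h] at hdiff
      rw [sub_self] at hdiff
      exact hsne hdiff.symm
    have hrel : relF H ι D θ a m.1 m' := by
      refine Or.inr ⟨h0, by rw [hdiff]; exact hsne, ?_, ?_⟩
      · rw [hdiff, order_single hreq, hδdef]
      · rw [hdiff, leadingCoeff_of_single]
    have hm'supp : ∀ γ ∈ m'.support, γ ≠ 0 := by
      intro γ hγ
      rw [HahnSeries.mem_support, hm'def, coeff_add] at hγ
      by_cases hc : m.1.coeff γ = 0
      · rw [hc, zero_add] at hγ
        have : γ = gmF H θ δ := by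
          by_contra hcon
          rw [coeff_single_of_ne hcon] at hγ
          exact hγ rfl
        rw [this]
        exact hg0
      · exact m.2.1 γ (by rwa [HahnSeries.mem_support])
    have hprog := progress H ι D θ a hD hθ hsol m.2 hm'supp hrel hne
    have hm'M : m' ∈ MSet D a := hprog.2
    have hback := hm ⟨m', hm'M⟩ hrel
    rcases hback with heq | ⟨h1', h2', -, -⟩
    · exact hne heq.symm
    · -- progress both ways
      have hprog' := progress H ι D θ a hD hθ hsol hm'M m.2.1
        (hm ⟨m', hm'M⟩ hrel) (by intro h; exact hne (by rw [h]))
      have hlt1 : ((a - D m.1).order : WithTop Γ) < ((a - D m').order : WithTop Γ) := by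
        rw [order_eq_orderTop_of_ne_zero h1']
        exact hprog.1
      have hlt2 : ((a - D m').order : WithTop Γ) < ((a - D m.1).order : WithTop Γ) := by
        rw [order_eq_orderTop_of_ne_zero h0]
        exact hprog'.1
      exact absurd hlt1 (not_lt_of_ge hlt2.le)

end Engine3

noncomputable section Final

open HahnSeries

variable {Φ : Type*} [LinearOrder Φ] {Γ : Type*} [AddCommGroup Γ] [LinearOrder Γ] [IsOrderedAddMonoid Γ]
  {k : Type*} [Field k]

theorem gamma_triv (hΦ : ¬ Nonempty Φ) (H : HahnEmbeddingData Φ Γ) (γ : Γ) : γ = 0 := by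
  refine H.inj ?_
  rw [map_zero]
  ext φ
  exact absurd ⟨φ⟩ hΦ

theorem D_triv (hΦ : ¬ Nonempty Φ) (H : HahnEmbeddingData Φ Γ) (ι : ℝ →+* k)
    (D : HahnSeries Γ k → HahnSeries Γ k) (hD : IsHardySeriesDerivation H ι D)
    (x : HahnSeries Γ k) : D x = 0 := by
  have hx : x = single 0 (x.coeff 0) := by
    ext γ
    rw [gamma_triv hΦ H γ, coeff_single_same]
  rw [hx, D_single_smul H ι D hD 0 (x.coeff 0), single_zero_one, D_one H ι D hD, smul_zero]

end Final

open HahnSeries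

/-- let `k((Γ))` carry a series derivation of Hardy type `d`, with
`θ_φ = v(d(t_φ)/t_φ)` and `θ̃ = l.u.b.{θ_φ : φ ∈ Φ}` (a priori in the Dedekind completion
of `Γ`).  Then every series `a` with `v(a) > θ̃` admits an integral, and `k((Γ))` is closed
under integration if and only if `θ̃ ∉ Γ`. -/
theorem integration_in_hahn_series {Φ : Type*} [LinearOrder Φ]
    {Γ : Type*} [AddCommGroup Γ] [LinearOrder Γ] [IsOrderedAddMonoid Γ] {k : Type*} [Field k]
    (H : HahnEmbeddingData Φ Γ) (ι : ℝ →+* k)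
    (D : HahnSeries Γ k → HahnSeries Γ k) (hD : IsHardySeriesDerivation H ι D)
    (θ : Φ → Γ) (hθ : ∀ φ, (logDer H D φ).orderTop = ((θ φ : Γ) : WithTop Γ)) :
    (∀ a : HahnSeries Γ k,
      (∀ φ : Φ, ((θ φ : Γ) : WithTop Γ) < a.orderTop) →
      ¬ IsLUB (Set.range fun φ => ((θ φ : Γ) : WithTop Γ)) a.orderTop →
      ∃ b : HahnSeries Γ k, b ≠ 0 ∧ D b = a) ∧
    ((∀ a : HahnSeries Γ k, ∃ b : HahnSeries Γ k, b ≠ 0 ∧ D b = a) ↔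
      ¬ ∃ g : Γ, IsLUB (Set.range θ) g) := by

  constructor
  · -- Part 1
    intro a h1 h2
    by_cases ha : a = 0
    · exact ⟨1, one_ne_zero, by rw [D_one H ι D hD, ha]⟩
    by_cases hΦ : Nonempty Φ
    · -- extract a margin u₀
      have hub : a.orderTop ∈ upperBounds (Set.range fun φ => ((θ φ : Γ) : WithTop Γ)) := by
        rintro _ ⟨φ, rfl⟩
        exact (h1 φ).le
      have hex : ∃ u ∈ upperBounds (Set.range fun φ => ((θ φ : Γ) : WithTop Γ)),
          ¬ a.orderTop ≤ u := by
        by_contra hcon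
        push_neg at hcon
        exact h2 ⟨hub, fun u hu => hcon u hu⟩
      obtain ⟨u, hu, hltu⟩ := hex
      have hult : u < a.orderTop := lt_of_not_ge hltu
      rw [← order_eq_orderTop_of_ne_zero ha] at hult
      cases u with
      | top => exact absurd hult (by simp)
      | coe u₀ =>
        have hu₀ : ∀ φ, θ φ ≤ u₀ := by
          intro φ
          have h := hu ⟨φ, rfl⟩
          simp only at h
          exact_mod_cast h
        have hu₀lt : u₀ < a.order := by exact_mod_cast hult
        refine integral_exists H ι D θ a hD hθ ?_ ha
        intro δ hδ
        exact solP_of_margin H ι D θ hD hθ hu₀ (lt_of_lt_of_le hu₀lt hδ)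
    · -- Φ empty and a ≠ 0 : the hypotheses are contradictory
      exfalso
      refine h2 ⟨?_, ?_⟩
      · rintro _ ⟨φ, rfl⟩
        exact absurd ⟨φ⟩ hΦ
      · intro y hy
        rw [← order_eq_orderTop_of_ne_zero ha, gamma_triv hΦ H a.order]
        cases y with
        | top => exact le_top
        | coe y₀ =>
          rw [gamma_triv hΦ H y₀]
  · -- Part 2
    constructor
    · -- closed under integration → no lub in Γ
      intro hall
      rintro ⟨g, hg⟩
      by_cases hΦ : Nonempty Φ
      · obtain ⟨b, hb0, hDb⟩ := hall (single g (1:k))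
        have hane : (single g (1:k)) ≠ 0 := single_ne_zero one_ne_zero
        obtain ⟨b', hb'0, hb'ord, hDb'⟩ :
            ∃ b', b' ≠ 0 ∧ b'.order ≠ 0 ∧ D b' = single g (1:k) := by
          by_cases hbo : b.order = 0
          · have hmem : b ∈ {x : HahnSeries Γ k | 0 ≤ x.orderTop} := by
              rw [Set.mem_setOf_eq, zero_le_orderTop_iff, hbo]
            rw [hD.2.1] at hmem
            obtain ⟨c, mm, hc, hmpos, hbcm⟩ := hmem
            have hDm : D mm = single g 1 := by
              have hsplit : D b = D c + D mm := by rw [hbcm, hD.1.map_add]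
              rw [hDb, hc, zero_add] at hsplit
              exact hsplit.symm
            have hm0 : mm ≠ 0 := by
              intro h
              rw [h, D_zero H ι D hD] at hDm
              exact hane hDm.symm
            exact ⟨mm, hm0, ne_of_gt ((zero_lt_orderTop_iff hm0).1 hmpos), hDm⟩
          · exact ⟨b, hb0, hbo, hDb⟩
        have hpin := dPin H ι D θ hD hθ hb'0 hb'ord
        rw [hDb', orderTop_single one_ne_zero, WithTop.coe_inj] at hpin
        -- hpin : g = b'.order + θ (leadOf H b'.order)
        set γ := b'.order with hγdef
        set ψ := leadOf H γ with hψdef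
        have hθψ : θ ψ ≤ g := hg.1 ⟨ψ, rfl⟩
        have hγeq : γ = g - θ ψ := by rw [hpin]; abel
        have hγpos : 0 < γ :=
          lt_of_le_of_ne (by rw [hγeq]; exact sub_nonneg.2 hθψ) (Ne.symm hb'ord)
        by_cases hmax2 : ∃ φ₂, ψ < φ₂
        · obtain ⟨φ₂, hφ₂⟩ := hmax2
          have hbφ := b_pos H φ₂
          have hd : 0 < γ - H.b φ₂ ∧ γ - H.b φ₂ ≠ 0 ∧ leadOf H (γ - H.b φ₂) = ψ := by
            refine pos_of_coeff H ?_ ?_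
            · rw [map_sub, coeff_sub,
                coeff_eq_zero_of_lt_leadOf H hbφ.2.1 (by rw [hbφ.2.2]; exact hφ₂), sub_zero]
              exact pos_coeff_leadOf H hγpos
            · intro χ hχ
              rw [map_sub, coeff_sub, coeff_eq_zero_of_lt_leadOf H hγpos.ne' hχ,
                coeff_eq_zero_of_lt_leadOf H hbφ.2.1
                  (by rw [hbφ.2.2]; exact hχ.trans hφ₂), sub_zero]
          have hub2 : θ ψ + (γ - H.b φ₂) ∈ upperBounds (Set.range θ) := by
            rintro _ ⟨φ', rfl⟩
            rcases le_or_gt φ' ψ with hle | hgt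
            · calc θ φ' ≤ θ ψ := theta_mono H ι D θ hD hθ hle
              _ ≤ θ ψ + (γ - H.b φ₂) := le_add_of_nonneg_right hd.1.le
            · have hstar := star H ι D θ hD hθ hgt
              have hwlt : θ φ' - θ ψ < γ - H.b φ₂ := by
                refine lt_of_lead_lt H hd.1
                  (sub_pos.2 (theta_lt H ι D θ hD hθ hgt)) ?_
                rw [hd.2.2]
                exact hstar.2
              have := sub_lt_iff_lt_add'.1 hwlt
              exact this.le
          have hle2 := hg.2 hub2
          rw [hpin] at hle2
          -- γ + θ ψ ≤ θ ψ + (γ - H.b φ₂)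
          have h6 := add_le_add_left hle2 (H.b φ₂)
          rw [show θ ψ + (γ - H.b φ₂) + H.b φ₂ = γ + θ ψ by abel] at h6
          have h7 : H.b φ₂ ≤ 0 := (add_le_iff_nonpos_right _).1 h6
          exact absurd h7 (not_le_of_gt hbφ.1)
        · push_neg at hmax2
          have hub2 : θ ψ ∈ upperBounds (Set.range θ) := by
            rintro _ ⟨φ', rfl⟩
            exact theta_mono H ι D θ hD hθ (hmax2 φ')
          have hle2 := hg.2 hub2
          rw [hpin] at hle2
          -- γ + θ ψ ≤ θ ψ
          have h7 : γ ≤ 0 := add_le_iff_nonpos_left.1 hle2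
          exact absurd h7 (not_le_of_gt hγpos)
      · -- Φ empty : D is identically zero, contradiction with surjectivity
        obtain ⟨b, -, hDb⟩ := hall 1
        rw [D_triv hΦ H ι D hD b] at hDb
        exact one_ne_zero hDb.symm
    · -- no lub → closed under integration
      intro hnl a
      have hΦ : Nonempty Φ := by
        by_contra hΦ
        refine hnl ⟨0, ?_, ?_⟩
        · rintro _ ⟨φ, -⟩
          exact absurd ⟨φ⟩ hΦ
        · intro y _
          rw [gamma_triv hΦ H y]
      by_cases ha : a = 0
      · exact ⟨1, one_ne_zero, by rw [D_one H ι D hD, ha]⟩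
      · exact integral_exists H ι D θ a hD hθ
          (fun δ _ => solP_of_not_lub H ι D θ hD hθ hnl δ) ha
end
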